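/- arXiv:1409.6282 — 7 statements merged into one kernel-verified Lean document; each statement's English description precedes it below -/
import Mathlib

section
/- Let σ be a Lie algebra automorphism of W and c ∈ ℂ* with σ(L_{0,0}) = c⁻¹ L_{0,0}. Then cΓ ⊆ Γ and there exists a character τ: Γ → ℂ* such that σ(L_{α,0}) = c⁻¹ τ(α) L_{cα,0} for all α ∈ Γ. -/
/-- The generalized Heisenberg–Virasoro algebra `HV(Γ)`: a complex Lie algebra `V` equipped
with a basis `{L_{α,i}, H_{α,i} | α ∈ Γ, i ∈ ℤ₊}` satisfying the defining bracket relations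
(any term whose second index would be `-1` has coefficient `0`, so truncated subtraction
on `ℕ` is harmless). -/
structure HVData (Γ : AddSubgroup ℂ) (V : Type*) [LieRing V] [LieAlgebra ℂ V] where
  L : Γ → ℕ → V
  H : Γ → ℕ → V
  basis : Module.Basis ((↥Γ × ℕ) ⊕ (↥Γ × ℕ)) ℂ V
  basis_inl : ∀ (α : Γ) (i : ℕ), basis (Sum.inl (α, i)) = L α i
  basis_inr : ∀ (α : Γ) (i : ℕ), basis (Sum.inr (α, i)) = H α i
  lie_L_L : ∀ (α β : Γ) (i j : ℕ),
    ⁅L α i, L β j⁆ = ((β : ℂ) - (α : ℂ)) • L (α + β) (i + j)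
      + ((j : ℂ) - (i : ℂ)) • L (α + β) (i + j - 1)
  lie_L_H : ∀ (α β : Γ) (i j : ℕ),
    ⁅L α i, H β j⁆ = (β : ℂ) • H (α + β) (i + j) + (j : ℂ) • H (α + β) (i + j - 1)
  lie_H_H : ∀ (α β : Γ) (i j : ℕ), ⁅H α i, H β j⁆ = 0

namespace HVData

variable {Γ : AddSubgroup ℂ} {V : Type*} [LieRing V] [LieAlgebra ℂ V]

/-- The abelian ideal `H` of `HV`, as a submodule. -/
noncomputable def Hspan (hv : HVData Γ V) : Submodule ℂ V :=
  Submodule.span ℂ (Set.range fun p : ↥Γ × ℕ => hv.H p.1 p.2)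

/-- The graded piece `HV_α = span{L_{α,i}, H_{α,i} | i ∈ ℤ₊}`. -/
noncomputable def grade (hv : HVData Γ V) (α : Γ) : Submodule ℂ V :=
  Submodule.span ℂ (Set.range (hv.L α) ∪ Set.range (hv.H α))

/-- A derivation `D` has degree `γ` if `D (HV_α) ⊆ HV_{α+γ}` for all `α ∈ Γ`. -/
def HasDegree (hv : HVData Γ V) (D : LieDerivation ℂ V V) (γ : Γ) : Prop :=
  ∀ α : Γ, ∀ x ∈ hv.grade α, D x ∈ hv.grade (α + γ)

end HVData

/-- The generalized Witt algebra `W(Γ)`: a complex Lie algebra `V` equipped with a basis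
`{L_{α,i} | α ∈ Γ, i ∈ ℤ₊}` satisfying the defining bracket relation. -/
structure WData (Γ : AddSubgroup ℂ) (V : Type*) [LieRing V] [LieAlgebra ℂ V] where
  L : Γ → ℕ → V
  basis : Module.Basis (↥Γ × ℕ) ℂ V
  basis_eq : ∀ (α : Γ) (i : ℕ), basis (α, i) = L α i
  lie_L_L : ∀ (α β : Γ) (i j : ℕ),
    ⁅L α i, L β j⁆ = ((β : ℂ) - (α : ℂ)) • L (α + β) (i + j)
      + ((j : ℂ) - (i : ℂ)) • L (α + β) (i + j - 1)

/-- The value in `ℂ` of a character `τ : Γ → ℂ*` at `α ∈ Γ`. -/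
noncomputable def charVal {Γ : AddSubgroup ℂ} (τ : Multiplicative ↥Γ →* ℂˣ) (α : Γ) : ℂ :=
  (τ (Multiplicative.ofAdd α) : ℂ)

section WittAux

variable {Γ : AddSubgroup ℂ} {V : Type*} [LieRing V] [LieAlgebra ℂ V]

lemma Waux_repr (w : WData Γ V) (x : V) (β : Γ) (j : ℕ) :
    w.basis.repr ⁅w.L 0 0, x⁆ (β, j)
      = (β : ℂ) * w.basis.repr x (β, j) + ((j : ℂ) + 1) * w.basis.repr x (β, j + 1) := by
  have hT : (w.basis.coord (β, j)) ∘ₗ (LieAlgebra.ad ℂ V (w.L 0 0))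
      = (β : ℂ) • w.basis.coord (β, j) + ((j : ℂ) + 1) • w.basis.coord (β, j + 1) := by
    have hrepr : ∀ (γ : Γ) (m : ℕ), w.basis.repr (w.L γ m) = Finsupp.single (γ, m) 1 := by
      intro γ m; rw [← w.basis_eq]; exact w.basis.repr_self _
    apply w.basis.ext
    rintro ⟨γ, k⟩
    simp only [LinearMap.comp_apply, LieAlgebra.ad_apply, LinearMap.add_apply,
      LinearMap.smul_apply, Module.Basis.coord_apply, w.basis_eq, w.lie_L_L, zero_add,
      map_add, map_smul, Finsupp.smul_apply, hrepr]
    simp only [Finsupp.single_apply, Prod.mk.injEq, AddSubgroup.coe_zero, sub_zero,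
      Nat.cast_zero, smul_eq_mul]
    rcases eq_or_ne γ β with rfl | hγ
    · rcases eq_or_ne k (j+1) with rfl | hk1
      · simp [Nat.succ_sub_one]
      · rcases eq_or_ne k j with rfl | hkj
        · rcases Nat.eq_zero_or_pos k with rfl | hk
          · simp
          · have : k - 1 ≠ k := by omega
            simp [this, hk1]
        · have : k - 1 ≠ j := by omega
          simp [this, hk1, hkj]
    · simp [hγ]
  have := LinearMap.congr_fun hT x
  simpa [Module.Basis.coord_apply] using this

lemma Weigen (w : WData Γ V) (x : V) (lam : ℂ) (hx : x ≠ 0)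
    (hlie : ⁅w.L 0 0, x⁆ = lam • x) :
    ∃ (hmem : lam ∈ Γ) (a : ℂ), a ≠ 0 ∧ x = a • w.L ⟨lam, hmem⟩ 0 := by
  set F := w.basis.repr x with hF
  have heq : ∀ (β : Γ) (j : ℕ),
      (β : ℂ) * F (β, j) + ((j : ℂ) + 1) * F (β, j + 1) = lam * F (β, j) := by
    intro β j
    have := Waux_repr w x β j
    rw [hlie] at this
    simpa [hF] using this.symm
  -- vanishing for β ≠ lam
  set n := F.support.sup (fun p => p.2) with hn
  have htop : ∀ (β : Γ) (j : ℕ), n < j → F (β, j) = 0 := by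
    intro β j hj
    by_contra h
    have : (β, j) ∈ F.support := Finsupp.mem_support_iff.mpr h
    have : j ≤ n := Finset.le_sup (f := fun p : Γ × ℕ => p.2) this
    omega
  have claimA : ∀ (β : Γ), (β : ℂ) ≠ lam → ∀ j, F (β, j) = 0 := by
    intro β hβ
    have key : ∀ d j, n + 1 ≤ j + d → F (β, j) = 0 := by
      intro d
      induction d with
      | zero => intro j hj; exact htop β j (by omega)
      | succ d ih =>
        intro j hj
        rcases le_or_gt (n + 1) (j + d) with h | h
        · exact ih j h
        · have h1 : F (β, j + 1) = 0 := ih (j + 1) (by omega)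
          have := heq β j
          rw [h1] at this
          have h2 : ((β : ℂ) - lam) * F (β, j) = 0 := by ring_nf; linear_combination this
          rcases mul_eq_zero.mp h2 with h | h
          · exact absurd (sub_eq_zero.mp h) hβ
          · exact h
    intro j; exact key (n + 1) j (by omega)
  have claimB : ∀ (β : Γ), (β : ℂ) = lam → ∀ j, F (β, j + 1) = 0 := by
    intro β hβ j
    have := heq β j
    rw [hβ] at this
    have h2 : ((j : ℂ) + 1) * F (β, j + 1) = 0 := by linear_combination this
    rcases mul_eq_zero.mp h2 with h | h
    · refine absurd h ?_
      have : ((j + 1 : ℕ) : ℂ) ≠ 0 := Nat.cast_ne_zero.mpr (Nat.succ_ne_zero j)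
      push_cast at this; exact this
    · exact h
  have hFne : F ≠ 0 := fun h => hx (by
    apply w.basis.repr.injective
    rw [← hF, h, map_zero])
  obtain ⟨⟨β₀, j₀⟩, hp⟩ := Finsupp.support_nonempty_iff.mpr hFne
  have hp' : F (β₀, j₀) ≠ 0 := Finsupp.mem_support_iff.mp hp
  have hβ₀ : (β₀ : ℂ) = lam := by
    by_contra h
    exact hp' (claimA β₀ h j₀)
  have hj₀ : j₀ = 0 := by
    rcases Nat.eq_zero_or_pos j₀ with h | h
    · exact h
    · exfalso; obtain ⟨m, rfl⟩ := Nat.exists_eq_succ_of_ne_zero (by omega : j₀ ≠ 0)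
      exact hp' (claimB β₀ hβ₀ m)
  subst hj₀
  have hmem : lam ∈ Γ := hβ₀ ▸ β₀.2
  refine ⟨hmem, F (β₀, 0), hp', ?_⟩
  have hβ₀' : (⟨lam, hmem⟩ : Γ) = β₀ := Subtype.ext hβ₀.symm
  rw [hβ₀']
  apply w.basis.repr.injective
  rw [← hF, map_smul, ← w.basis_eq, w.basis.repr_self]
  ext ⟨γ, k⟩
  rw [Finsupp.smul_apply, Finsupp.single_apply]
  rcases eq_or_ne (β₀, 0) (γ, k) with h | h
  · rw [if_pos h]; rw [← h]; simp
  · rw [if_neg h]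
    rcases eq_or_ne γ β₀ with rfl | hγ
    · have hk : k ≠ 0 := fun hk => h (by rw [hk])
      obtain ⟨m, rfl⟩ := Nat.exists_eq_succ_of_ne_zero hk
      simp [claimB γ hβ₀ m]
    · have : (γ : ℂ) ≠ lam := fun hh => hγ (Subtype.ext (hh.trans hβ₀.symm))
      simp [claimA γ this k]

end WittAux

/-- If `σ` is an automorphism of `W` with `σ(L_{0,0}) = c⁻¹ L_{0,0}`,
then `cΓ ⊆ Γ` and there is a character `τ : Γ → ℂ*` with
`σ(L_{α,0}) = c⁻¹ τ(α) L_{cα,0}` for all `α ∈ Γ`. -/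
theorem W_automorphism_on_L_alpha_0 (Γ : AddSubgroup ℂ) (hΓ : Γ ≠ ⊥)
    {V : Type*} [LieRing V] [LieAlgebra ℂ V] (w : WData Γ V)
    (σ : V ≃ₗ⁅ℂ⁆ V) (c : ℂ) (hc : c ≠ 0)
    (h0 : σ (w.L 0 0) = c⁻¹ • w.L 0 0) :
    ∃ (hmem : ∀ α : Γ, c * (α : ℂ) ∈ Γ) (τ : Multiplicative ↥Γ →* ℂˣ),
      ∀ α : Γ, σ (w.L α 0) = (c⁻¹ * charVal τ α) • w.L ⟨c * (α : ℂ), hmem α⟩ 0 := by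
  have σsmul : ∀ (a : ℂ) (y : V), σ (a • y) = a • σ y := fun a y =>
    σ.toLinearEquiv.map_smul a y
  have coeff_eq : ∀ (p : Γ × ℕ) (a a' : ℂ), a • w.basis p = a' • w.basis p → a = a' := by
    intro p a a' h
    have : (a - a') • w.basis p = 0 := by rw [sub_smul, h, sub_self]
    rcases smul_eq_zero.mp this with h | h
    · exact sub_eq_zero.mp h
    · exact absurd h (w.basis.ne_zero p)
  have key : ∀ α : Γ, ∃ (h : c * (α : ℂ) ∈ Γ) (a : ℂ),
      a ≠ 0 ∧ σ (w.L α 0) = a • w.L ⟨c * (α : ℂ), h⟩ 0 := by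
    intro α
    have hlie0 : ⁅w.L 0 0, w.L α 0⁆ = (α : ℂ) • w.L α 0 := by
      rw [w.lie_L_L]; simp
    have hx : σ (w.L α 0) ≠ 0 := by
      intro h
      have h2 : w.L α 0 = 0 := σ.toLinearEquiv.map_eq_zero_iff.mp h
      rw [← w.basis_eq] at h2
      exact w.basis.ne_zero (α, 0) h2
    have hlie : ⁅w.L 0 0, σ (w.L α 0)⁆ = (c * (α : ℂ)) • σ (w.L α 0) := by
      have h1 : σ ⁅w.L 0 0, w.L α 0⁆ = ⁅σ (w.L 0 0), σ (w.L α 0)⁆ := LieEquiv.map_lie σ _ _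
      rw [hlie0, σsmul, h0, smul_lie] at h1
      calc ⁅w.L 0 0, σ (w.L α 0)⁆ = c • (c⁻¹ • ⁅w.L 0 0, σ (w.L α 0)⁆) := by
            rw [smul_smul, mul_inv_cancel₀ hc, one_smul]
        _ = c • ((α : ℂ) • σ (w.L α 0)) := by rw [← h1]
        _ = (c * (α : ℂ)) • σ (w.L α 0) := by rw [smul_smul]
    exact Weigen w _ _ hx hlie
  choose hmem f hfne hσ using key
  have hzero : (⟨c * ((0 : Γ) : ℂ), hmem 0⟩ : Γ) = 0 := by
    apply Subtype.ext; simp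
  have hf0 : f 0 = c⁻¹ := by
    have h1 := hσ 0
    rw [hzero, h0] at h1
    rw [← w.basis_eq] at h1
    exact (coeff_eq _ _ _ h1).symm
  have hmul : ∀ α β : Γ, α ≠ β → f (α + β) = c * f α * f β := by
    intro α β hne
    have hcoe : (α : ℂ) ≠ (β : ℂ) := fun h => hne (Subtype.ext h)
    have hsum : (⟨c * ((α : Γ) : ℂ), hmem α⟩ : Γ) + ⟨c * ((β : Γ) : ℂ), hmem β⟩
        = ⟨c * ((α + β : Γ) : ℂ), hmem (α + β)⟩ := by
      apply Subtype.ext; push_cast; ring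
    have hL : σ ⁅w.L α 0, w.L β 0⁆
        = (((β : ℂ) - α) * f (α + β)) • w.L ⟨c * ((α + β : Γ) : ℂ), hmem (α + β)⟩ 0 := by
      rw [w.lie_L_L]
      simp only [Nat.cast_zero, sub_self, zero_smul, add_zero]
      rw [σsmul, hσ, smul_smul]
    have hR : ⁅σ (w.L α 0), σ (w.L β 0)⁆
        = (f α * f β * (c * β - c * α)) • w.L ⟨c * ((α + β : Γ) : ℂ), hmem (α + β)⟩ 0 := by
      rw [hσ, hσ, lie_smul, smul_lie, w.lie_L_L, hsum]
      simp only [Nat.cast_zero, sub_self, zero_smul, add_zero, smul_smul]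
      congr 1
      push_cast; ring
    have h1 : (((β : ℂ) - α) * f (α + β)) • w.L ⟨c * ((α + β : Γ) : ℂ), hmem (α + β)⟩ 0
        = (f α * f β * (c * β - c * α)) • w.L ⟨c * ((α + β : Γ) : ℂ), hmem (α + β)⟩ 0 := by
      rw [← hL, ← hR]; exact LieEquiv.map_lie σ _ _
    rw [← w.basis_eq] at h1
    have h2 := coeff_eq _ _ _ h1
    have h3 : ((β : ℂ) - α) * f (α + β) = ((β : ℂ) - α) * (c * f α * f β) := by
      linear_combination h2
    exact mul_left_cancel₀ (sub_ne_zero.mpr (Ne.symm hcoe)) h3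
  have pick : ∀ α : Γ, ∃ γ : Γ, γ ≠ 0 ∧ γ ≠ α ∧ γ ≠ -α := by
    intro α
    have hΓ' := AddSubgroup.ne_bot_iff_exists_ne_zero.mp hΓ
    obtain ⟨g, hg0⟩ := hΓ'
    have hg0' : (g : ℂ) ≠ 0 := fun h => hg0 (Subtype.ext h)
    by_cases h1 : g ≠ α ∧ g ≠ -α
    · exact ⟨g, hg0, h1.1, h1.2⟩
    · push_neg at h1
      have hcase : (g : ℂ) = α ∨ (g : ℂ) = -(α : ℂ) := by
        rcases Classical.em (g = α) with h | h
        · exact Or.inl (congrArg Subtype.val h)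
        · right
          have := congrArg Subtype.val (h1 h)
          push_cast at this; exact this
      refine ⟨g + g, ?_, ?_, ?_⟩ <;>
        · rw [Ne, Subtype.ext_iff]
          push_cast
          intro h
          apply hg0'
          rcases hcase with hg | hg
          all_goals first
            | linear_combination h / 2
            | linear_combination h - hg
            | linear_combination (h + hg) / 3
            | linear_combination (h - hg) / 3
            | linear_combination h + hg
  have hci : c * c⁻¹ = 1 := mul_inv_cancel₀ hc
  have hsq : ∀ α : Γ, f (α + α) = c * f α * f α := by
    intro α
    obtain ⟨γ, hγ0, hγα, hγnα⟩ := pick α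
    have hγcoe : (γ : ℂ) ≠ 0 := fun h => hγ0 (Subtype.ext h)
    have e1 : α + α = (α + γ) + (α + -γ) := by abel
    have h2 : (α + γ) ≠ (α + -γ) := by
      intro h
      apply hγcoe
      have := congrArg Subtype.val h
      push_cast at this
      linear_combination this / 2
    have hγγ : γ ≠ -γ := by
      intro h
      apply hγcoe
      have := congrArg Subtype.val h
      push_cast at this
      linear_combination this / 2
    have hαγ : α ≠ γ := Ne.symm hγα
    have hαnγ : α ≠ -γ := by
      intro h
      exact hγnα (by rw [h]; simp)
    have hu : c * (f γ * f (-γ)) = c⁻¹ := by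
      have h := hmul γ (-γ) hγγ
      rw [add_neg_cancel, hf0] at h
      linear_combination -h
    calc f (α + α) = f ((α + γ) + (α + -γ)) := by rw [← e1]
      _ = c * f (α + γ) * f (α + -γ) := hmul _ _ h2
      _ = c * (c * f α * f γ) * (c * f α * f (-γ)) := by rw [hmul α γ hαγ, hmul α (-γ) hαnγ]
      _ = c * f α * f α := by
          linear_combination (c ^ 2 * f α ^ 2) * hu + (c * f α ^ 2) * hci
  have hτmul : ∀ a b : Multiplicative ↥Γ,
      (fun a : Multiplicative ↥Γ => Units.mk0 (c * f a.toAdd)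
        (mul_ne_zero hc (hfne _))) (a * b)
      = (fun a : Multiplicative ↥Γ => Units.mk0 (c * f a.toAdd)
        (mul_ne_zero hc (hfne _))) a
        * (fun a : Multiplicative ↥Γ => Units.mk0 (c * f a.toAdd)
        (mul_ne_zero hc (hfne _))) b := by
    intro a b
    ext
    show c * f (a * b).toAdd = (c * f a.toAdd) * (c * f b.toAdd)
    rw [toAdd_mul]
    rcases eq_or_ne a.toAdd b.toAdd with h | h
    · rw [h, hsq]; ring
    · rw [hmul _ _ h]; ring
  set g : Multiplicative ↥Γ → ℂˣ := fun a => Units.mk0 (c * f a.toAdd)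
    (mul_ne_zero hc (hfne _)) with hg
  refine ⟨hmem, MonoidHom.mk' g hτmul, fun α => ?_⟩
  have hcv : charVal (MonoidHom.mk' g hτmul) α = c * f α := rfl
  rw [hcv, hσ α, ← mul_assoc, inv_mul_cancel₀ hc, one_mul]
end

section
/- Let σ be a Lie algebra automorphism of HV, c ∈ ℂ*, and τ: Γ → ℂ* a character such that σ(L_{α,0}) − c⁻¹ τ(α) L_{cα,0} ∈ H for all α ∈ Γ (with cΓ = Γ). Then there exists e ∈ ℂ* such that σ(H_{α,0}) = τ(α) e H_{cα,0} for all α ∈ Γ. -/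
/- ### Auxiliary lemmas -/

lemma HV_jordan1 (g : ℕ → ℂ) (μ : ℂ) (hμ : μ ≠ 0) (N : ℕ) (hN : ∀ i, N ≤ i → g i = 0)
    (hrec : ∀ i, μ * g i + ((i : ℂ) + 1) * g (i + 1) = 0) : ∀ i, g i = 0 := by
  have key : ∀ m i, N ≤ i + m → g i = 0 := by
    intro m
    induction m with
    | zero => intro i h; exact hN i (by omega)
    | succ m ih =>
      intro i h
      by_cases h' : N ≤ i + m
      · exact ih i h'
      · have h1 : g (i + 1) = 0 := ih (i + 1) (by omega)
        have h2 := hrec i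
        rw [h1, mul_zero, add_zero, mul_eq_zero] at h2
        exact h2.resolve_left hμ
  intro i
  exact key N i (by omega)

lemma HV_ind_shift (k i : ℕ) :
    (k : ℂ) * (if k - 1 = i then 1 else 0) = ((i : ℂ) + 1) * (if k = i + 1 then 1 else 0) := by
  rcases eq_or_ne k (i + 1) with rfl | hk
  · rw [if_pos (by omega), if_pos rfl]
    push_cast; ring
  · rw [if_neg hk, mul_zero]
    rcases eq_or_ne (k - 1) i with hk1 | hk1
    · have : k = 0 := by omega
      subst this
      simp
    · rw [if_neg hk1, mul_zero]

lemma HV_sigma_smul {V : Type*} [LieRing V] [LieAlgebra ℂ V] (σ : V ≃ₗ⁅ℂ⁆ V)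
    (a : ℂ) (x : V) : σ (a • x) = a • σ x :=
  σ.toLinearEquiv.map_smul a x

lemma HV_sigma_zero {V : Type*} [LieRing V] [LieAlgebra ℂ V] (σ : V ≃ₗ⁅ℂ⁆ V) :
    σ 0 = 0 :=
  σ.toLinearEquiv.map_zero

lemma HV_exists_ne_zero {Γ : AddSubgroup ℂ} (hΓ : Γ ≠ ⊥) : ∃ γ1 : Γ, (γ1 : ℂ) ≠ 0 := by
  by_contra hall
  push_neg at hall
  apply hΓ
  rw [AddSubgroup.eq_bot_iff_forall]
  intro x hx
  exact hall ⟨x, hx⟩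

namespace HVData

variable {Γ : AddSubgroup ℂ} {V : Type*} [LieRing V] [LieAlgebra ℂ V] (hv : HVData Γ V)

lemma H_mem_Hspan (γ : Γ) (j : ℕ) : hv.H γ j ∈ hv.Hspan :=
  Submodule.subset_span ⟨(γ, j), rfl⟩

lemma Hspan_eq : hv.Hspan = Submodule.span ℂ (hv.basis '' (Set.range Sum.inr)) := by
  unfold Hspan
  congr 1
  ext x
  constructor
  · rintro ⟨p, rfl⟩
    exact ⟨Sum.inr p, ⟨p, rfl⟩, (hv.basis_inr p.1 p.2).trans rfl⟩
  · rintro ⟨s, ⟨p, rfl⟩, rfl⟩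
    exact ⟨p, (hv.basis_inr p.1 p.2).symm⟩

lemma mem_Hspan_iff (x : V) :
    x ∈ hv.Hspan ↔ ∀ p : ↥Γ × ℕ, hv.basis.repr x (Sum.inl p) = 0 := by
  rw [hv.Hspan_eq, Module.Basis.mem_span_image]
  constructor
  · intro h p
    by_contra hne
    obtain ⟨q, hq⟩ := h (Finsupp.mem_support_iff.2 hne)
    exact Sum.inr_ne_inl hq
  · intro h s hs
    rcases s with p | p
    · exact absurd (h p) (Finsupp.mem_support_iff.1 hs)
    · exact ⟨p, rfl⟩

lemma lie_Hspan_left {x : V} (hx : x ∈ hv.Hspan) (y : V) : ⁅x, y⁆ ∈ hv.Hspan := by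
  induction hx using Submodule.span_induction with
  | mem z hz =>
    obtain ⟨p, rfl⟩ := hz
    have hy : y ∈ Submodule.span ℂ (Set.range hv.basis) := by
      rw [Module.Basis.span_eq]; trivial
    induction hy using Submodule.span_induction with
    | mem z' hz' =>
      obtain ⟨s, rfl⟩ := hz'
      rcases s with ⟨δ, k⟩ | ⟨δ, k⟩
      · rw [hv.basis_inl]
        have heq : ⁅hv.H p.1 p.2, hv.L δ k⁆ = -(⁅hv.L δ k, hv.H p.1 p.2⁆) :=
          (lie_skew _ _).symm
        rw [heq, hv.lie_L_H]
        refine Submodule.neg_mem _ (Submodule.add_mem _ ?_ ?_) <;>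
          exact Submodule.smul_mem _ _ (hv.H_mem_Hspan _ _)
      · rw [hv.basis_inr, hv.lie_H_H]
        exact zero_mem _
    | zero => rw [lie_zero]; exact zero_mem _
    | add a b _ _ ha hb => rw [lie_add]; exact add_mem ha hb
    | smul t a _ ha => rw [lie_smul]; exact Submodule.smul_mem _ _ ha
  | zero => rw [zero_lie]; exact zero_mem _
  | add a b _ _ ha hb => rw [add_lie]; exact add_mem ha hb
  | smul t a _ ha => rw [smul_lie]; exact Submodule.smul_mem _ _ ha

lemma lie_Hspan_eq_zero {x y : V} (hx : x ∈ hv.Hspan) (hy : y ∈ hv.Hspan) :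
    ⁅x, y⁆ = 0 := by
  induction hx using Submodule.span_induction with
  | mem z hz =>
    obtain ⟨p, rfl⟩ := hz
    induction hy using Submodule.span_induction with
    | mem z' hz' =>
      obtain ⟨q, rfl⟩ := hz'
      exact hv.lie_H_H _ _ _ _
    | zero => rw [lie_zero]
    | add a b _ _ ha hb => rw [lie_add, ha, hb, add_zero]
    | smul t a _ ha => rw [lie_smul, ha, smul_zero]
  | zero => rw [zero_lie]
  | add a b _ _ ha hb => rw [add_lie, ha, hb, add_zero]
  | smul t a _ ha => rw [smul_lie, ha, smul_zero]

lemma repr_basis_apply (s t : (↥Γ × ℕ) ⊕ (↥Γ × ℕ)) :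
    hv.basis.repr (hv.basis s) t = if s = t then 1 else 0 := by
  rw [Module.Basis.repr_self, Finsupp.single_apply]

lemma repr_lie_L00_inl (w : V) (γ : Γ) (i : ℕ) :
    hv.basis.repr ⁅hv.L 0 0, w⁆ (Sum.inl (γ, i))
      = (γ : ℂ) * hv.basis.repr w (Sum.inl (γ, i))
        + ((i : ℂ) + 1) * hv.basis.repr w (Sum.inl (γ, i + 1)) := by
  have hmap : (hv.basis.coord (Sum.inl (γ, i))).comp
        (LieAlgebra.ad ℂ V (hv.L 0 0) : V →ₗ[ℂ] V)
      = (γ : ℂ) • hv.basis.coord (Sum.inl (γ, i))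
        + ((i : ℂ) + 1) • hv.basis.coord (Sum.inl (γ, i + 1)) := by
    apply hv.basis.ext
    rintro (⟨δ, k⟩ | ⟨δ, k⟩) <;>
      simp only [LinearMap.comp_apply, LinearMap.add_apply, LinearMap.smul_apply,
        Module.Basis.coord_apply, LieAlgebra.ad_apply, smul_eq_mul]
    · rw [hv.basis_inl, hv.lie_L_L 0 δ 0 k]
      simp only [ZeroMemClass.coe_zero, sub_zero, zero_add, Nat.cast_zero, zero_add]
      rw [← hv.basis_inl δ k, ← hv.basis_inl δ (k - 1)]
      rw [map_add, map_smul, map_smul, Finsupp.add_apply, Finsupp.smul_apply,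
        Finsupp.smul_apply]
      simp only [hv.repr_basis_apply, smul_eq_mul]
      simp only [Sum.inl.injEq, Prod.mk.injEq]
      rcases eq_or_ne δ γ with rfl | hδγ
      · simp only [true_and]
        rw [HV_ind_shift]
      · simp [hδγ]
    · rw [hv.basis_inr, hv.lie_L_H 0 δ 0 k]
      simp only [zero_add]
      rw [← hv.basis_inr δ k, ← hv.basis_inr δ (k - 1)]
      rw [map_add, map_smul, map_smul, Finsupp.add_apply, Finsupp.smul_apply,
        Finsupp.smul_apply]
      simp only [hv.repr_basis_apply, smul_eq_mul]
      simp
  have := congrArg (fun F : V →ₗ[ℂ] ℂ => F w) hmap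
  simpa [LieAlgebra.ad_apply, Module.Basis.coord_apply] using this

lemma repr_lie_L00_inr (w : V) (γ : Γ) (i : ℕ) :
    hv.basis.repr ⁅hv.L 0 0, w⁆ (Sum.inr (γ, i))
      = (γ : ℂ) * hv.basis.repr w (Sum.inr (γ, i))
        + ((i : ℂ) + 1) * hv.basis.repr w (Sum.inr (γ, i + 1)) := by
  have hmap : (hv.basis.coord (Sum.inr (γ, i))).comp
        (LieAlgebra.ad ℂ V (hv.L 0 0) : V →ₗ[ℂ] V)
      = (γ : ℂ) • hv.basis.coord (Sum.inr (γ, i))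
        + ((i : ℂ) + 1) • hv.basis.coord (Sum.inr (γ, i + 1)) := by
    apply hv.basis.ext
    rintro (⟨δ, k⟩ | ⟨δ, k⟩) <;>
      simp only [LinearMap.comp_apply, LinearMap.add_apply, LinearMap.smul_apply,
        Module.Basis.coord_apply, LieAlgebra.ad_apply, smul_eq_mul]
    · rw [hv.basis_inl, hv.lie_L_L 0 δ 0 k]
      simp only [ZeroMemClass.coe_zero, sub_zero, zero_add, Nat.cast_zero, zero_add]
      rw [← hv.basis_inl δ k, ← hv.basis_inl δ (k - 1)]
      rw [map_add, map_smul, map_smul, Finsupp.add_apply, Finsupp.smul_apply,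
        Finsupp.smul_apply]
      simp only [hv.repr_basis_apply, smul_eq_mul]
      simp
    · rw [hv.basis_inr, hv.lie_L_H 0 δ 0 k]
      simp only [zero_add]
      rw [← hv.basis_inr δ k, ← hv.basis_inr δ (k - 1)]
      rw [map_add, map_smul, map_smul, Finsupp.add_apply, Finsupp.smul_apply,
        Finsupp.smul_apply]
      simp only [hv.repr_basis_apply, smul_eq_mul]
      simp only [Sum.inr.injEq, Prod.mk.injEq]
      rcases eq_or_ne δ γ with rfl | hδγ
      · simp only [true_and]
        rw [HV_ind_shift]
      · simp [hδγ]
  have := congrArg (fun F : V →ₗ[ℂ] ℂ => F w) hmap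
  simpa [LieAlgebra.ad_apply, Module.Basis.coord_apply] using this

lemma support_bound (w : V) : ∃ N : ℕ, ∀ (γ : Γ) (i : ℕ), N ≤ i →
    hv.basis.repr w (Sum.inl (γ, i)) = 0 ∧ hv.basis.repr w (Sum.inr (γ, i)) = 0 := by
  refine ⟨(hv.basis.repr w).support.sup (Sum.elim Prod.snd Prod.snd) + 1, ?_⟩
  intro γ i hi
  constructor <;>
  · by_contra h
    have hs := Finsupp.mem_support_iff.2 h
    have hle := Finset.le_sup (f := Sum.elim Prod.snd Prod.snd) hs
    simp only [Sum.elim_inl, Sum.elim_inr] at hle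
    omega

lemma vanish_L (w : V) (γ₀ : Γ) (hw : ⁅hv.L 0 0, w⁆ - (γ₀ : ℂ) • w ∈ hv.Hspan) :
    ∀ (γ : Γ) (i : ℕ), (γ, i) ≠ (γ₀, 0) → hv.basis.repr w (Sum.inl (γ, i)) = 0 := by
  have hco : ∀ (γ : Γ) (i : ℕ),
      ((γ : ℂ) - (γ₀ : ℂ)) * hv.basis.repr w (Sum.inl (γ, i))
        + ((i : ℂ) + 1) * hv.basis.repr w (Sum.inl (γ, i + 1)) = 0 := by
    intro γ i
    have h0 := (hv.mem_Hspan_iff _).1 hw (γ, i)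
    rw [map_sub, map_smul, Finsupp.sub_apply, Finsupp.smul_apply, smul_eq_mul,
      hv.repr_lie_L00_inl] at h0
    linear_combination h0
  obtain ⟨N, hN⟩ := hv.support_bound w
  intro γ i hne
  rcases eq_or_ne γ γ₀ with rfl | hγ
  · have hi : i ≠ 0 := fun h => hne (by rw [h])
    obtain ⟨j, rfl⟩ := Nat.exists_eq_succ_of_ne_zero hi
    have hj := hco γ j
    rw [sub_self, zero_mul, zero_add, mul_eq_zero] at hj
    rcases hj with h | h
    · exact absurd h (Nat.cast_add_one_ne_zero j)
    · exact h
  · exact HV_jordan1 (fun n => hv.basis.repr w (Sum.inl (γ, n))) ((γ : ℂ) - (γ₀ : ℂ))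
      (sub_ne_zero.2 (Subtype.coe_injective.ne hγ)) N (fun n hn => (hN γ n hn).1)
      (hco γ) i

lemma vanish_H (w : V) (γ₀ : Γ) (hw : ⁅hv.L 0 0, w⁆ = (γ₀ : ℂ) • w) :
    ∀ (γ : Γ) (i : ℕ), (γ, i) ≠ (γ₀, 0) → hv.basis.repr w (Sum.inr (γ, i)) = 0 := by
  have hco : ∀ (γ : Γ) (i : ℕ),
      ((γ : ℂ) - (γ₀ : ℂ)) * hv.basis.repr w (Sum.inr (γ, i))
        + ((i : ℂ) + 1) * hv.basis.repr w (Sum.inr (γ, i + 1)) = 0 := by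
    intro γ i
    have h0 : hv.basis.repr ⁅hv.L 0 0, w⁆ (Sum.inr (γ, i))
        = (γ₀ : ℂ) * hv.basis.repr w (Sum.inr (γ, i)) := by
      rw [hw, map_smul, Finsupp.smul_apply, smul_eq_mul]
    rw [hv.repr_lie_L00_inr] at h0
    linear_combination h0
  obtain ⟨N, hN⟩ := hv.support_bound w
  intro γ i hne
  rcases eq_or_ne γ γ₀ with rfl | hγ
  · have hi : i ≠ 0 := fun h => hne (by rw [h])
    obtain ⟨j, rfl⟩ := Nat.exists_eq_succ_of_ne_zero hi
    have hj := hco γ j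
    rw [sub_self, zero_mul, zero_add, mul_eq_zero] at hj
    rcases hj with h | h
    · exact absurd h (Nat.cast_add_one_ne_zero j)
    · exact h
  · exact HV_jordan1 (fun n => hv.basis.repr w (Sum.inr (γ, n))) ((γ : ℂ) - (γ₀ : ℂ))
      (sub_ne_zero.2 (Subtype.coe_injective.ne hγ)) N (fun n hn => (hN γ n hn).2)
      (hco γ) i

lemma eq_coeff_smul (w : V) (γ₀ : Γ)
    (h1 : ∀ p : ↥Γ × ℕ, hv.basis.repr w (Sum.inl p) = 0)
    (h2 : ∀ (γ : Γ) (i : ℕ), (γ, i) ≠ (γ₀, 0) → hv.basis.repr w (Sum.inr (γ, i)) = 0) :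
    w = hv.basis.repr w (Sum.inr (γ₀, 0)) • hv.H γ₀ 0 := by
  have hrepr : hv.basis.repr w
      = Finsupp.single (Sum.inr (γ₀, 0)) (hv.basis.repr w (Sum.inr (γ₀, 0))) := by
    ext s
    rcases s with p | ⟨γ, i⟩
    · rw [h1 p, Finsupp.single_apply, if_neg (by simp)]
    · rw [Finsupp.single_apply]
      rcases eq_or_ne (γ, i) (γ₀, 0) with he | hne
      · obtain ⟨h3, h4⟩ := Prod.mk.injEq γ i γ₀ 0 ▸ he
        subst h3; subst h4
        rw [if_pos rfl]
      · rw [h2 γ i hne, if_neg (fun hcon => hne (Sum.inr.inj hcon).symm)]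
  have := hv.basis.repr.symm_apply_apply w
  rw [hrepr, Module.Basis.repr_symm_single, hv.basis_inr] at this
  exact this.symm

lemma smul_H_cancel {q : Γ} {j : ℕ} {x y : ℂ} (h : x • hv.H q j = y • hv.H q j) :
    x = y := by
  have := congrArg (fun v => hv.basis.repr v (Sum.inr (q, j))) h
  simp only [map_smul, Finsupp.smul_apply, smul_eq_mul, ← hv.basis_inr,
    hv.repr_basis_apply, if_pos, mul_one] at this
  simpa using this

lemma sigma_H_eq (hΓ : Γ ≠ ⊥) (σ : V ≃ₗ⁅ℂ⁆ V) (c : ℂ) (hc0 : c ≠ 0)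
    (cm : Γ → Γ) (hcm : ∀ α : Γ, ((cm α : ℂ)) = c * (α : ℂ))
    (hL0 : σ (hv.L 0 0) - c⁻¹ • hv.L 0 0 ∈ hv.Hspan) (α : Γ) :
    ∃ f : ℂ, f ≠ 0 ∧ σ (hv.H α 0) = f • hv.H (cm α) 0 := by
  set w := σ (hv.H α 0) with hw
  set h₀ := σ (hv.L 0 0) - c⁻¹ • hv.L 0 0 with hh₀
  have hσL : σ (hv.L 0 0) = c⁻¹ • hv.L 0 0 + h₀ := by rw [hh₀]; abel
  have hlie1 : ⁅σ (hv.L 0 0), w⁆ = (α : ℂ) • w := by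
    rw [hw, ← LieEquiv.map_lie]
    have hb : ⁅hv.L 0 0, hv.H α 0⁆ = (α : ℂ) • hv.H α 0 := by
      rw [hv.lie_L_H 0 α 0 0]
      simp
    rw [hb, HV_sigma_smul]
  have hlie2 : ⁅hv.L 0 0, w⁆ - (c * (α : ℂ)) • w = -(c • ⁅h₀, w⁆) := by
    have h1 := hlie1
    rw [hσL, add_lie, smul_lie] at h1
    have h2 := congrArg (fun v => c • v) h1
    simp only [smul_add, smul_smul, mul_inv_cancel₀ hc0, one_smul] at h2
    rw [← h2]
    abel
  have hmem : ⁅hv.L 0 0, w⁆ - ((cm α : ℂ)) • w ∈ hv.Hspan := by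
    rw [hcm α, hlie2]
    exact Submodule.neg_mem _ (Submodule.smul_mem _ _ (hv.lie_Hspan_left hL0 w))
  have hvan := hv.vanish_L w (cm α) hmem
  set t := hv.basis.repr w (Sum.inl (cm α, 0)) with ht
  set h' := w - t • hv.L (cm α) 0 with hh'
  have hh'mem : h' ∈ hv.Hspan := by
    rw [hv.mem_Hspan_iff]
    rintro ⟨γ, i⟩
    rw [hh', map_sub, map_smul, Finsupp.sub_apply, Finsupp.smul_apply, smul_eq_mul,
      ← hv.basis_inl (cm α) 0, hv.repr_basis_apply]
    rcases eq_or_ne (γ, i) (cm α, 0) with he | hne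
    · rw [he, if_pos rfl, mul_one, ht]
      exact sub_self _
    · rw [hvan γ i hne, if_neg (fun hcon => hne (Sum.inl.inj hcon).symm), mul_zero,
        sub_zero]
  obtain ⟨β, hβ0, hβ1⟩ : ∃ β : Γ, (β : ℂ) ≠ 0 ∧ c * (α : ℂ) + (β : ℂ) ≠ 0 := by
    obtain ⟨γ1, hγ1⟩ := HV_exists_ne_zero hΓ
    by_cases hb : c * (α : ℂ) + (γ1 : ℂ) = 0
    · refine ⟨γ1 + γ1, ?_, ?_⟩
      · rw [AddSubgroup.coe_add]
        intro h
        exact hγ1 (add_self_eq_zero.mp h)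
      · rw [AddSubgroup.coe_add]
        intro h
        exact hγ1 (by linear_combination h - hb)
    · exact ⟨γ1, hγ1, hb⟩
  have hzero : ⁅w, ⁅w, hv.H β 0⁆⁆ = 0 := by
    have h1 : ⁅hv.H α 0, σ.symm (hv.H β 0)⁆ ∈ hv.Hspan :=
      hv.lie_Hspan_left (hv.H_mem_Hspan α 0) _
    have h2 : ⁅hv.H α 0, ⁅hv.H α 0, σ.symm (hv.H β 0)⁆⁆ = 0 :=
      hv.lie_Hspan_eq_zero (hv.H_mem_Hspan α 0) h1
    calc ⁅w, ⁅w, hv.H β 0⁆⁆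
        = σ ⁅hv.H α 0, ⁅hv.H α 0, σ.symm (hv.H β 0)⁆⁆ := by
          rw [LieEquiv.map_lie, LieEquiv.map_lie, LieEquiv.apply_symm_apply, hw]
      _ = 0 := by rw [h2, HV_sigma_zero]
  have hw' : w = t • hv.L (cm α) 0 + h' := by rw [hh']; abel
  have e1 : ⁅t • hv.L (cm α) 0 + h', hv.H β 0⁆ = (t * (β : ℂ)) • hv.H (cm α + β) 0 := by
    rw [add_lie, smul_lie, hv.lie_L_H, hv.lie_Hspan_eq_zero hh'mem (hv.H_mem_Hspan β 0)]
    simp [smul_smul]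
  have e2 : ⁅t • hv.L (cm α) 0 + h', (t * (β : ℂ)) • hv.H (cm α + β) 0⁆
      = (t * (β : ℂ) * (t * ((cm α + β : Γ) : ℂ))) • hv.H (cm α + (cm α + β)) 0 := by
    rw [lie_smul, add_lie, smul_lie, hv.lie_L_H,
      hv.lie_Hspan_eq_zero hh'mem (hv.H_mem_Hspan _ _)]
    simp [smul_smul]
  rw [hw', e1, e2] at hzero
  have hs : t * (β : ℂ) * (t * ((cm α + β : Γ) : ℂ)) = 0 := by
    rcases smul_eq_zero.1 hzero with h | h
    · exact h
    · exact absurd h (by rw [← hv.basis_inr]; exact hv.basis.ne_zero _)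
  have ht0 : t = 0 := by
    have hcoe : ((cm α + β : Γ) : ℂ) = c * (α : ℂ) + (β : ℂ) := by
      rw [AddSubgroup.coe_add, hcm]
    rw [hcoe] at hs
    rcases mul_eq_zero.1 hs with h | h
    · rcases mul_eq_zero.1 h with h' | h'
      · exact h'
      · exact absurd h' hβ0
    · rcases mul_eq_zero.1 h with h' | h'
      · exact h'
      · exact absurd h' hβ1
  have hwh' : w = h' := by rw [hh', ht0, zero_smul, sub_zero]
  have hwH : w ∈ hv.Hspan := hwh' ▸ hh'mem
  have hlie3 : ⁅hv.L 0 0, w⁆ = ((cm α : ℂ)) • w := by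
    have hz : ⁅h₀, w⁆ = 0 := hv.lie_Hspan_eq_zero hL0 hwH
    have h4 := hlie2
    rw [hz, smul_zero, neg_zero, sub_eq_zero] at h4
    rw [h4, hcm]
  have hvanH := hv.vanish_H w (cm α) hlie3
  have h1 : ∀ p : ↥Γ × ℕ, hv.basis.repr w (Sum.inl p) = 0 := (hv.mem_Hspan_iff w).1 hwH
  have hfin := hv.eq_coeff_smul w (cm α) h1 hvanH
  refine ⟨hv.basis.repr w (Sum.inr (cm α, 0)), ?_, hfin⟩
  intro hf0
  rw [hf0, zero_smul] at hfin
  have h6 : σ (hv.H α 0) = σ 0 := by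
    rw [HV_sigma_zero, ← hw]
    exact hfin
  have hH0 : hv.H α 0 = 0 := σ.injective h6
  exact absurd hH0 (by rw [← hv.basis_inr]; exact hv.basis.ne_zero _)

end HVData

lemma charVal_ne_zero {Γ : AddSubgroup ℂ} (τ : Multiplicative ↥Γ →* ℂˣ) (α : Γ) :
    charVal τ α ≠ 0 := Units.ne_zero _

lemma charVal_add {Γ : AddSubgroup ℂ} (τ : Multiplicative ↥Γ →* ℂˣ) (α β : Γ) :
    charVal τ (α + β) = charVal τ α * charVal τ β := by
  unfold charVal
  rw [← Units.val_mul, ← map_mul, ← ofAdd_add]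

/-- Let `σ` be an automorphism of `HV`, `c ∈ ℂ*` with `cΓ = Γ`, and `τ` a
character such that `σ(L_{α,0}) ≡ c⁻¹ τ(α) L_{cα,0}` modulo `H` for all `α`.  Then there is
`e ∈ ℂ*` with `σ(H_{α,0}) = τ(α) e H_{cα,0}` for all `α ∈ Γ`. -/
theorem HV_automorphism_on_H_alpha_0 (Γ : AddSubgroup ℂ) (hΓ : Γ ≠ ⊥)
    {V : Type*} [LieRing V] [LieAlgebra ℂ V] (hv : HVData Γ V)
    (σ : V ≃ₗ⁅ℂ⁆ V) (c : ℂ) (hc0 : c ≠ 0)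
    (hcΓ : ∀ x : ℂ, x ∈ Γ ↔ c * x ∈ Γ) (τ : Multiplicative ↥Γ →* ℂˣ)
    (hL : ∀ α : Γ, σ (hv.L α 0)
        - (c⁻¹ * charVal τ α) • hv.L ⟨c * (α : ℂ), (hcΓ (α : ℂ)).mp α.2⟩ 0 ∈ hv.Hspan) :
    ∃ e : ℂ, e ≠ 0 ∧ ∀ α : Γ,
      σ (hv.H α 0) = (charVal τ α * e) • hv.H ⟨c * (α : ℂ), (hcΓ (α : ℂ)).mp α.2⟩ 0 := by
  let cm : Γ → Γ := fun α => ⟨c * (α : ℂ), (hcΓ (α : ℂ)).mp α.2⟩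
  have hcm : ∀ α : Γ, ((cm α : ℂ)) = c * (α : ℂ) := fun α => rfl
  have hL0 : σ (hv.L 0 0) - c⁻¹ • hv.L 0 0 ∈ hv.Hspan := by
    have h1 := hL 0
    have hch : charVal τ 0 = 1 := by
      unfold charVal
      rw [ofAdd_zero, map_one, Units.val_one]
    have hidx : (⟨c * ((0 : Γ) : ℂ), (hcΓ ((0 : Γ) : ℂ)).mp (0 : Γ).2⟩ : Γ) = (0 : Γ) :=
      Subtype.ext (by simp)
    rw [hch, mul_one, hidx] at h1
    exact h1
  choose f hf0 hfeq using fun α => hv.sigma_H_eq hΓ σ c hc0 cm hcm hL0 α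
  have hmul : ∀ (β α' : Γ), (α' : ℂ) ≠ 0 → f (β + α') = charVal τ β * f α' := by
    intro β α' hα'
    have hbr : ⁅hv.L β 0, hv.H α' 0⁆ = (α' : ℂ) • hv.H (β + α') 0 := by
      rw [hv.lie_L_H]
      simp
    have hbmem : σ (hv.L β 0) - (c⁻¹ * charVal τ β) • hv.L (cm β) 0 ∈ hv.Hspan := hL β
    have hσLβ : σ (hv.L β 0) = (c⁻¹ * charVal τ β) • hv.L (cm β) 0
        + (σ (hv.L β 0) - (c⁻¹ * charVal τ β) • hv.L (cm β) 0) := by abel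
    have hrhs : σ ⁅hv.L β 0, hv.H α' 0⁆
        = ((α' : ℂ) * f (β + α')) • hv.H (cm (β + α')) 0 := by
      rw [hbr, HV_sigma_smul, hfeq, smul_smul]
    have hlhs : σ ⁅hv.L β 0, hv.H α' 0⁆
        = (c⁻¹ * charVal τ β * (f α' * (c * (α' : ℂ)))) • hv.H (cm β + cm α') 0 := by
      rw [LieEquiv.map_lie, hfeq α', hσLβ, add_lie, smul_lie, lie_smul, lie_smul,
        hv.lie_L_H, hv.lie_Hspan_eq_zero hbmem (hv.H_mem_Hspan _ _)]
      simp only [zero_add, Nat.cast_zero, zero_smul, add_zero, smul_zero, smul_smul, hcm]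
      try ring_nf
    have hcmsum : cm β + cm α' = cm (β + α') :=
      Subtype.ext (by simp [hcm, AddSubgroup.coe_add, mul_add])
    rw [hcmsum] at hlhs
    have hsc : (α' : ℂ) * f (β + α') = c⁻¹ * charVal τ β * (f α' * (c * (α' : ℂ))) :=
      hv.smul_H_cancel (hrhs.symm.trans hlhs)
    have hsc2 : (α' : ℂ) * f (β + α') = (α' : ℂ) * (charVal τ β * f α') := by
      rw [hsc]
      field_simp
      try ring
    exact mul_left_cancel₀ hα' hsc2
  obtain ⟨α₀, hα₀⟩ := HV_exists_ne_zero hΓ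
  refine ⟨(charVal τ α₀)⁻¹ * f α₀, mul_ne_zero (inv_ne_zero (charVal_ne_zero τ α₀)) (hf0 α₀),
    fun α => ?_⟩
  have hkey : f α = charVal τ α * ((charVal τ α₀)⁻¹ * f α₀) := by
    have hsub : α - α₀ + α₀ = α := by abel
    have h5 := hmul (α - α₀) α₀ hα₀
    rw [hsub] at h5
    have hch : charVal τ (α - α₀) * charVal τ α₀ = charVal τ α := by
      rw [← charVal_add, hsub]
    rw [h5, ← hch, mul_assoc]
    congr 1
    rw [← mul_assoc, mul_inv_cancel₀ (charVal_ne_zero τ α₀), one_mul]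
  have := hfeq α
  rw [hkey] at this
  exact this
end

section
/- Let σ be a Lie algebra automorphism of HV, c ∈ ℂ*, and e ∈ ℂ* such that σ(L_{0,i}) − c^{i−1} L_{0,i} ∈ H for all i ∈ ℤ₊ and σ(H_{0,0}) = e H_{0,0}. Then σ(H_{0,j}) = e c^{j} H_{0,j} for every j ∈ ℤ₊. -/
section Helpers

open Submodule

variable {Γ : AddSubgroup ℂ} {V : Type*} [LieRing V] [LieAlgebra ℂ V] (hv : HVData Γ V)

/-- Key expansion of a bracket coefficient as a finite sum over the basis. -/
lemma HVData.repr_lie (x u : V) (ℓ : (↥Γ × ℕ) ⊕ (↥Γ × ℕ)) :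
    hv.basis.repr ⁅x, u⁆ ℓ =
      (hv.basis.repr u).sum (fun k cc => cc * hv.basis.repr ⁅x, hv.basis k⁆ ℓ) := by
  have h : ⁅x, u⁆ = (LieAlgebra.ad ℂ V x) u := rfl
  rw [h]
  conv_lhs => rw [← hv.basis.linearCombination_repr u, Finsupp.linearCombination_apply,
    map_finsuppSum, map_finsuppSum, Finsupp.sum_apply]
  exact Finsupp.sum_congr fun k _ => by
    rw [map_smul, map_smul, Finsupp.smul_apply, smul_eq_mul]; rfl

lemma HVData.H_mem_Hspan_s14 (α : Γ) (i : ℕ) : hv.H α i ∈ hv.Hspan :=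
  Submodule.subset_span ⟨(α, i), rfl⟩

/-- `H` is an ideal. -/
lemma HVData.lie_mem_Hspan {h : V} (hh : h ∈ hv.Hspan) (v : V) : ⁅h, v⁆ ∈ hv.Hspan := by
  induction hh using Submodule.span_induction with
  | zero => rw [zero_lie]; exact zero_mem _
  | add x y hx hy px py => rw [add_lie]; exact add_mem px py
  | smul a x hx px => rw [smul_lie]; exact smul_mem _ _ px
  | mem x hx =>
    obtain ⟨⟨α, i⟩, rfl⟩ := hx
    have hv' : v ∈ Submodule.span ℂ (Set.range hv.basis) := by
      rw [hv.basis.span_eq]; trivial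
    induction hv' using Submodule.span_induction with
    | zero => rw [lie_zero]; exact zero_mem _
    | add x y hx hy px py => rw [lie_add]; exact add_mem px py
    | smul a x hx px => rw [lie_smul]; exact smul_mem _ _ px
    | mem w hw =>
      obtain ⟨k, rfl⟩ := hw
      rcases k with ⟨β, j⟩ | ⟨β, j⟩
      · rw [hv.basis_inl, ← lie_skew, hv.lie_L_H]
        exact neg_mem (add_mem (smul_mem _ _ (hv.H_mem_Hspan_s14 _ _))
          (smul_mem _ _ (hv.H_mem_Hspan_s14 _ _)))
      · rw [hv.basis_inr, hv.lie_H_H]; exact zero_mem _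

/-- `H` is abelian. -/
lemma HVData.lie_eq_zero_of_mem_Hspan {h h' : V} (hh : h ∈ hv.Hspan) (hh' : h' ∈ hv.Hspan) :
    ⁅h, h'⁆ = 0 := by
  induction hh' using Submodule.span_induction with
  | zero => rw [lie_zero]
  | add x y hx hy px py => rw [lie_add, px, py, add_zero]
  | smul a x hx px => rw [lie_smul, px, smul_zero]
  | mem x hx =>
    obtain ⟨⟨α, i⟩, rfl⟩ := hx
    induction hh using Submodule.span_induction with
    | zero => rw [zero_lie]
    | add x y hx hy px py => rw [add_lie, px, py, add_zero]
    | smul a x hx px => rw [smul_lie, px, smul_zero]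
    | mem w hw => obtain ⟨⟨β, j⟩, rfl⟩ := hw; exact hv.lie_H_H _ _ _ _

lemma HVData.mem_Hspan_iff_s14 (u : V) :
    u ∈ hv.Hspan ↔ ∀ p : ↥Γ × ℕ, hv.basis.repr u (Sum.inl p) = 0 := by
  have hs : hv.Hspan = Submodule.span ℂ (hv.basis '' Set.range Sum.inr) := by
    unfold HVData.Hspan
    congr 1
    ext x
    constructor
    · rintro ⟨p, rfl⟩; exact ⟨Sum.inr p, ⟨p, rfl⟩, by simpa using hv.basis_inr p.1 p.2⟩
    · rintro ⟨_, ⟨p, rfl⟩, rfl⟩; exact ⟨p, by simpa using (hv.basis_inr p.1 p.2).symm⟩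
  rw [hs, Module.Basis.mem_span_image]
  constructor
  · intro hsub p
    by_contra hne
    have : Sum.inl p ∈ (hv.basis.repr u).support := Finsupp.mem_support_iff.2 hne
    obtain ⟨q, hq⟩ := hsub this
    exact Sum.inr_ne_inl hq
  · intro hz x hx
    rcases x with p | p
    · exact absurd (Finsupp.mem_support_iff.1 hx) (not_not.2 (hz p))
    · exact ⟨p, rfl⟩

/-- Downward-induction vanishing lemma. -/
lemma kill_aux {g : ℕ → ℂ} (hfin : (Function.support g).Finite) {β : ℂ} (hβ : β ≠ 0)
    (F : ℕ → ℂ) (hrec : ∀ m, β * g m = F m * g (m + 1)) : ∀ m, g m = 0 := by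
  obtain ⟨N, hN⟩ := hfin.bddAbove
  have key : ∀ d m, N < m + d → g m = 0 := by
    intro d
    induction d with
    | zero =>
      intro m hm
      by_contra h
      exact absurd (hN (Function.mem_support.2 h)) (by omega)
    | succ d ih =>
      intro m hm
      rcases lt_or_ge N (m + d) with h | h
      · exact ih m h
      · have h1 : g (m + 1) = 0 := ih (m + 1) (by omega)
        have h2 := hrec m
        rw [h1, mul_zero] at h2
        exact (mul_eq_zero.1 h2).resolve_left hβ
  exact fun m => key (N + 1) m (by omega)

end Helpers

section Coeffs

variable {Γ : AddSubgroup ℂ} {V : Type*} [LieRing V] [LieAlgebra ℂ V] (hv : HVData Γ V)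

lemma HVData.sum_ite_coeff (hv : HVData Γ V) (f : ((↥Γ × ℕ) ⊕ (↥Γ × ℕ)) →₀ ℂ) (k₀ : (↥Γ × ℕ) ⊕ (↥Γ × ℕ)) (t : ℂ) :
    (f.sum fun k cc => if k = k₀ then t * cc else 0) = t * f k₀ := by
  classical
  rw [Finsupp.sum_ite_eq']
  by_cases h : k₀ ∈ f.support
  · simp [h]
  · simp [Finsupp.notMem_support_iff.1 h, h]

lemma HVData.lie_L01_basis_inr (α : Γ) (i : ℕ) :
    ⁅hv.L 0 1, hv.basis (Sum.inr (α, i))⁆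
      = (α : ℂ) • hv.basis (Sum.inr (α, i + 1)) + (i : ℂ) • hv.basis (Sum.inr (α, i)) := by
  simp only [hv.basis_inr]
  rw [hv.lie_L_H, show 1 + i - 1 = i from by omega, show 1 + i = i + 1 from by omega, zero_add]

lemma HVData.lie_L01_basis_inl (α : Γ) (i : ℕ) :
    ⁅hv.L 0 1, hv.basis (Sum.inl (α, i))⁆
      = (α : ℂ) • hv.basis (Sum.inl (α, i + 1)) + ((i : ℂ) - 1) • hv.basis (Sum.inl (α, i)) := by
  simp only [hv.basis_inl]
  rw [hv.lie_L_L, show 1 + i - 1 = i from by omega, show 1 + i = i + 1 from by omega, zero_add]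
  simp only [ZeroMemClass.coe_zero, sub_zero, Nat.cast_one]

lemma HVData.lie_L00_basis_inl (α : Γ) (i : ℕ) :
    ⁅hv.L 0 0, hv.basis (Sum.inl (α, i))⁆
      = (α : ℂ) • hv.basis (Sum.inl (α, i)) + (i : ℂ) • hv.basis (Sum.inl (α, i - 1)) := by
  simp only [hv.basis_inl]
  rw [hv.lie_L_L]
  simp only [zero_add, ZeroMemClass.coe_zero, sub_zero, Nat.cast_zero]

lemma HVData.lie_L00_basis_inr (α : Γ) (i : ℕ) :
    ⁅hv.L 0 0, hv.basis (Sum.inr (α, i))⁆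
      = (α : ℂ) • hv.basis (Sum.inr (α, i)) + (i : ℂ) • hv.basis (Sum.inr (α, i - 1)) := by
  simp only [hv.basis_inr]
  rw [hv.lie_L_H]
  simp only [zero_add]

/-- Coefficient (A): the `H_{β,0}` coefficient of `[L_{0,1}, u]` vanishes. -/
lemma HVData.coeffA (u : V) (β : Γ) :
    hv.basis.repr ⁅hv.L 0 1, u⁆ (Sum.inr (β, 0)) = 0 := by
  classical
  rw [hv.repr_lie]
  have key : ∀ k cc, cc * hv.basis.repr ⁅hv.L 0 1, hv.basis k⁆ (Sum.inr (β, 0)) = 0 := by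
    rintro (⟨α, i⟩ | ⟨α, i⟩) cc
    · rw [hv.lie_L01_basis_inl, map_add, map_smul, map_smul, Module.Basis.repr_self, Module.Basis.repr_self]
      simp [Finsupp.single_apply]
    · rw [hv.lie_L01_basis_inr, map_add, map_smul, map_smul, Module.Basis.repr_self, Module.Basis.repr_self,
        Finsupp.add_apply, Finsupp.smul_apply, Finsupp.smul_apply, Finsupp.single_apply,
        Finsupp.single_apply, smul_eq_mul, smul_eq_mul]
      simp only [Sum.inr.injEq, Prod.mk.injEq, ZeroMemClass.coe_zero]
      by_cases hα : α = β
      · subst hα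
        simp only [true_and]
        split_ifs <;> first | (exfalso; omega) | (subst_vars; push_cast; ring1) | (exact (False.elim (by assumption)))
      · simp [hα]
  rw [Finsupp.sum_congr (g2 := fun _ _ => (0 : ℂ)) (fun k _ => key k _)]
  exact Finset.sum_const_zero

/-- Coefficient (B). -/
lemma HVData.coeffB (u : V) (β : Γ) (m : ℕ) :
    hv.basis.repr ⁅hv.L 0 1, u⁆ (Sum.inr (β, m + 1))
      = (β : ℂ) * hv.basis.repr u (Sum.inr (β, m))
        + ((m : ℂ) + 1) * hv.basis.repr u (Sum.inr (β, m + 1)) := by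
  classical
  rw [hv.repr_lie]
  have key : ∀ k cc, cc * hv.basis.repr ⁅hv.L 0 1, hv.basis k⁆ (Sum.inr (β, m + 1))
      = (if k = Sum.inr (β, m) then (β : ℂ) * cc else 0)
        + (if k = Sum.inr (β, m + 1) then ((m : ℂ) + 1) * cc else 0) := by
    rintro (⟨α, i⟩ | ⟨α, i⟩) cc
    · rw [hv.lie_L01_basis_inl, map_add, map_smul, map_smul, Module.Basis.repr_self, Module.Basis.repr_self]
      simp [Finsupp.single_apply]
    · rw [hv.lie_L01_basis_inr, map_add, map_smul, map_smul, Module.Basis.repr_self, Module.Basis.repr_self,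
        Finsupp.add_apply, Finsupp.smul_apply, Finsupp.smul_apply, Finsupp.single_apply,
        Finsupp.single_apply, smul_eq_mul, smul_eq_mul]
      simp only [Sum.inr.injEq, Prod.mk.injEq, Nat.add_right_cancel_iff]
      by_cases hα : α = β
      · subst hα
        simp only [true_and]
        split_ifs <;> first | (exfalso; omega) | (subst_vars; push_cast; ring1) | (exact (False.elim (by assumption)))
      · simp [hα]
  rw [Finsupp.sum_congr (g2 := fun k cc => (if k = Sum.inr (β, m) then (β : ℂ) * cc else 0)
      + (if k = Sum.inr (β, m + 1) then ((m : ℂ) + 1) * cc else 0)) (fun k _ => key k _),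
    Finsupp.sum_add, hv.sum_ite_coeff, hv.sum_ite_coeff]

/-- Coefficient (C). -/
lemma HVData.coeffC (u : V) (β : Γ) :
    hv.basis.repr ⁅hv.L 0 1, u⁆ (Sum.inl (β, 0))
      = (-1) * hv.basis.repr u (Sum.inl (β, 0)) := by
  classical
  rw [hv.repr_lie]
  have key : ∀ k cc, cc * hv.basis.repr ⁅hv.L 0 1, hv.basis k⁆ (Sum.inl (β, 0))
      = (if k = Sum.inl (β, 0) then (-1 : ℂ) * cc else 0) := by
    rintro (⟨α, i⟩ | ⟨α, i⟩) cc
    · rw [hv.lie_L01_basis_inl, map_add, map_smul, map_smul, Module.Basis.repr_self, Module.Basis.repr_self,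
        Finsupp.add_apply, Finsupp.smul_apply, Finsupp.smul_apply, Finsupp.single_apply,
        Finsupp.single_apply, smul_eq_mul, smul_eq_mul]
      simp only [Sum.inl.injEq, Prod.mk.injEq]
      by_cases hα : α = β
      · subst hα
        simp only [true_and]
        split_ifs <;> first | (exfalso; omega) | (subst_vars; push_cast; ring1) | (exact (False.elim (by assumption)))
      · simp [hα]
    · rw [hv.lie_L01_basis_inr, map_add, map_smul, map_smul, Module.Basis.repr_self, Module.Basis.repr_self]
      simp [Finsupp.single_apply]
  rw [Finsupp.sum_congr (g2 := fun k cc => if k = Sum.inl (β, 0) then (-1 : ℂ) * cc else 0)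
      (fun k _ => key k _), hv.sum_ite_coeff]

/-- Coefficient (D). -/
lemma HVData.coeffD (u : V) (β : Γ) (m : ℕ) :
    hv.basis.repr ⁅hv.L 0 1, u⁆ (Sum.inl (β, m + 1))
      = (β : ℂ) * hv.basis.repr u (Sum.inl (β, m))
        + (m : ℂ) * hv.basis.repr u (Sum.inl (β, m + 1)) := by
  classical
  rw [hv.repr_lie]
  have key : ∀ k cc, cc * hv.basis.repr ⁅hv.L 0 1, hv.basis k⁆ (Sum.inl (β, m + 1))
      = (if k = Sum.inl (β, m) then (β : ℂ) * cc else 0)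
        + (if k = Sum.inl (β, m + 1) then (m : ℂ) * cc else 0) := by
    rintro (⟨α, i⟩ | ⟨α, i⟩) cc
    · rw [hv.lie_L01_basis_inl, map_add, map_smul, map_smul, Module.Basis.repr_self, Module.Basis.repr_self,
        Finsupp.add_apply, Finsupp.smul_apply, Finsupp.smul_apply, Finsupp.single_apply,
        Finsupp.single_apply, smul_eq_mul, smul_eq_mul]
      simp only [Sum.inl.injEq, Prod.mk.injEq, Nat.add_right_cancel_iff]
      by_cases hα : α = β
      · subst hα
        simp only [true_and]
        split_ifs <;> first | (exfalso; omega) | (subst_vars; push_cast; ring1) | (exact (False.elim (by assumption)))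
      · simp [hα]
    · rw [hv.lie_L01_basis_inr, map_add, map_smul, map_smul, Module.Basis.repr_self, Module.Basis.repr_self]
      simp [Finsupp.single_apply]
  rw [Finsupp.sum_congr (g2 := fun k cc => (if k = Sum.inl (β, m) then (β : ℂ) * cc else 0)
      + (if k = Sum.inl (β, m + 1) then (m : ℂ) * cc else 0)) (fun k _ => key k _),
    Finsupp.sum_add, hv.sum_ite_coeff, hv.sum_ite_coeff]

/-- Coefficient (E). -/
lemma HVData.coeffE (u : V) (n : ℕ) :
    hv.basis.repr ⁅hv.L 0 0, u⁆ (Sum.inl ((0 : Γ), n + 1))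
      = ((n : ℂ) + 2) * hv.basis.repr u (Sum.inl ((0 : Γ), n + 2)) := by
  classical
  rw [hv.repr_lie]
  have key : ∀ k cc, cc * hv.basis.repr ⁅hv.L 0 0, hv.basis k⁆ (Sum.inl ((0 : Γ), n + 1))
      = (if k = Sum.inl ((0 : Γ), n + 2) then ((n : ℂ) + 2) * cc else 0) := by
    rintro (⟨α, i⟩ | ⟨α, i⟩) cc
    · rw [hv.lie_L00_basis_inl, map_add, map_smul, map_smul, Module.Basis.repr_self, Module.Basis.repr_self,
        Finsupp.add_apply, Finsupp.smul_apply, Finsupp.smul_apply, Finsupp.single_apply,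
        Finsupp.single_apply, smul_eq_mul, smul_eq_mul]
      simp only [Sum.inl.injEq, Prod.mk.injEq]
      by_cases hα : α = 0
      · subst hα
        simp only [true_and, ZeroMemClass.coe_zero]
        split_ifs <;> first | (exfalso; omega) | (subst_vars; push_cast; ring1) | (exact (False.elim (by assumption)))
      · simp [hα]
    · rw [hv.lie_L00_basis_inr, map_add, map_smul, map_smul, Module.Basis.repr_self, Module.Basis.repr_self]
      simp [Finsupp.single_apply]
  rw [Finsupp.sum_congr (g2 := fun k cc =>
      if k = Sum.inl ((0 : Γ), n + 2) then ((n : ℂ) + 2) * cc else 0)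
      (fun k _ => key k _), hv.sum_ite_coeff]

end Coeffs

section MainAux

variable {Γ : AddSubgroup ℂ} {V : Type*} [LieRing V] [LieAlgebra ℂ V] (hv : HVData Γ V)

lemma HVData.support_col_finite (hv : HVData Γ V) (f : ((↥Γ × ℕ) ⊕ (↥Γ × ℕ)) →₀ ℂ)
    (F : ℕ → (↥Γ × ℕ) ⊕ (↥Γ × ℕ)) (hF : Function.Injective F) :
    (Function.support fun m => f (F m)).Finite := by
  apply Set.Finite.subset (Set.Finite.preimage hF.injOn f.support.finite_toSet)
  intro m hm
  simpa [Finsupp.mem_support_iff] using hm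

end MainAux

theorem HV_automorphism_on_H_0_j' (Γ : AddSubgroup ℂ)
    {V : Type*} [LieRing V] [LieAlgebra ℂ V] (hv : HVData Γ V)
    (σ : V ≃ₗ⁅ℂ⁆ V) (c : ℂ) (hc0 : c ≠ 0) (e : ℂ) (he : e ≠ 0)
    (hL : ∀ i : ℕ, σ (hv.L 0 i) - c ^ ((i : ℤ) - 1) • hv.L 0 i ∈ hv.Hspan)
    (hH0 : σ (hv.H 0 0) = e • hv.H 0 0) :
    ∀ j : ℕ, σ (hv.H 0 j) = (e * c ^ j) • hv.H 0 j := by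
  intro j
  induction j with
  | zero => simpa using hH0
  | succ j ih =>
    classical
    set u : V := σ (hv.H 0 (j + 1)) with hu_def
    set f := hv.basis.repr u with hf_def
    have hj1 : ((j : ℂ) + 1) ≠ 0 := by
      have : ((j + 1 : ℕ) : ℂ) ≠ 0 := Nat.cast_ne_zero.2 (by omega)
      push_cast at this; exact this
    have hj2 : ((j : ℂ) + 2) ≠ 0 := by
      have : ((j + 2 : ℕ) : ℂ) ≠ 0 := Nat.cast_ne_zero.2 (by omega)
      push_cast at this; exact this
    -- the two known images
    have hw1 : σ (hv.L 0 1) - hv.L 0 1 ∈ hv.Hspan := by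
      have h := hL 1
      norm_num at h
      simpa using h
    have hw0 : σ (hv.L 0 0) - c⁻¹ • hv.L 0 0 ∈ hv.Hspan := by
      have h := hL 0
      norm_num [zpow_neg, zpow_one] at h
      simpa using h
    -- bracket relations
    have bra1 : ⁅hv.L 0 1, hv.H 0 (j + 1)⁆ = ((j : ℂ) + 1) • hv.H 0 (j + 1) := by
      have e2 : 1 + (j + 1) - 1 = j + 1 := by omega
      rw [hv.lie_L_H, e2]
      push_cast
      simp
    have bra0 : ⁅hv.L 0 0, hv.H 0 (j + 1)⁆ = ((j : ℂ) + 1) • hv.H 0 j := by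
      have e2 : 0 + (j + 1) - 1 = j := by omega
      rw [hv.lie_L_H, e2]
      push_cast
      simp
    -- equation 1
    have hsmul : ∀ (a : ℂ) (x : V), σ (a • x) = a • σ x := fun a x =>
      σ.toLinearEquiv.map_smul a x
    have e1 : ⁅σ (hv.L 0 1) - hv.L 0 1, u⁆ + ⁅hv.L 0 1, u⁆ = ((j : ℂ) + 1) • u := by
      have h := σ.map_lie (hv.L 0 1) (hv.H 0 (j + 1))
      rw [bra1, hsmul, ← hu_def] at h
      rw [← add_lie, sub_add_cancel, ← h]
    -- equation 2
    have e2 : ⁅σ (hv.L 0 0) - c⁻¹ • hv.L 0 0, u⁆ + c⁻¹ • ⁅hv.L 0 0, u⁆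
        = ((j : ℂ) + 1) • ((e * c ^ j) • hv.H 0 j) := by
      have h := σ.map_lie (hv.L 0 0) (hv.H 0 (j + 1))
      rw [bra0, hsmul, ih, ← hu_def] at h
      rw [← smul_lie, ← add_lie, sub_add_cancel, ← h]
    -- inl coefficients of the H-ideal brackets vanish
    have h_lw1 : ∀ p : ↥Γ × ℕ, hv.basis.repr ⁅σ (hv.L 0 1) - hv.L 0 1, u⁆ (Sum.inl p) = 0 :=
      (hv.mem_Hspan_iff_s14 _).1 (hv.lie_mem_Hspan hw1 u)
    have h_lw0 : ∀ p : ↥Γ × ℕ,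
        hv.basis.repr ⁅σ (hv.L 0 0) - c⁻¹ • hv.L 0 0, u⁆ (Sum.inl p) = 0 :=
      (hv.mem_Hspan_iff_s14 _).1 (hv.lie_mem_Hspan hw0 u)
    -- relations for the L-coefficients of u
    have ra0 : ∀ β : Γ, f (Sum.inl (β, 0)) = 0 := by
      intro β
      have h := congrArg (fun v => hv.basis.repr v (Sum.inl (β, 0))) e1
      simp only [map_add, Finsupp.add_apply, map_smul, Finsupp.smul_apply, smul_eq_mul] at h
      rw [h_lw1, hv.coeffC] at h
      have h2 : ((j : ℂ) + 2) * f (Sum.inl (β, 0)) = 0 := by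
        rw [hf_def]; linear_combination -h
      exact (mul_eq_zero.1 h2).resolve_left hj2
    have ra1 : ∀ (β : Γ) (m : ℕ),
        (β : ℂ) * f (Sum.inl (β, m)) = ((j : ℂ) + 1 - (m : ℂ)) * f (Sum.inl (β, m + 1)) := by
      intro β m
      have h := congrArg (fun v => hv.basis.repr v (Sum.inl (β, m + 1))) e1
      simp only [map_add, Finsupp.add_apply, map_smul, Finsupp.smul_apply, smul_eq_mul] at h
      rw [h_lw1, hv.coeffD] at h
      rw [hf_def]; linear_combination h
    have raβ : ∀ β : Γ, β ≠ 0 → ∀ m : ℕ, f (Sum.inl (β, m)) = 0 := by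
      intro β hβ
      have hβc : (β : ℂ) ≠ 0 := fun h => hβ (ZeroMemClass.coe_eq_zero.mp h)
      exact kill_aux
        (hv.support_col_finite f (fun m => Sum.inl (β, m)) (fun a b h => by simpa using h))
        hβc (fun m => (j : ℂ) + 1 - (m : ℂ)) (fun m => ra1 β m)
    have ra02 : f (Sum.inl ((0 : Γ), j + 2)) = 0 := by
      have h := congrArg (fun v => hv.basis.repr v (Sum.inl ((0 : Γ), j + 1))) e2
      simp only [map_add, Finsupp.add_apply, map_smul, Finsupp.smul_apply, smul_eq_mul] at h
      rw [h_lw0, hv.coeffE] at h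
      have hz : hv.basis.repr (hv.H 0 j) (Sum.inl ((0 : Γ), j + 1)) = 0 := by
        rw [← hv.basis_inr, Module.Basis.repr_self, Finsupp.single_apply]
        simp
      rw [hz] at h
      have h2 : c⁻¹ * (((j : ℂ) + 2) * f (Sum.inl ((0 : Γ), j + 2))) = 0 := by
        rw [hf_def]; linear_combination h
      rcases mul_eq_zero.1 h2 with h3 | h3
      · exact absurd h3 (inv_ne_zero hc0)
      · exact (mul_eq_zero.1 h3).resolve_left hj2
    have hAll : ∀ p : ↥Γ × ℕ, f (Sum.inl p) = 0 := by
      rintro ⟨β, m⟩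
      by_cases hβ : β = 0
      · subst hβ
        match m with
        | 0 => exact ra0 0
        | Nat.succ m' =>
          by_cases hm : m' = j + 1
          · subst hm; exact ra02
          · have h := ra1 0 m'
            rw [ZeroMemClass.coe_zero, zero_mul] at h
            have hcoe : ((j : ℂ) + 1 - (m' : ℂ)) ≠ 0 := by
              rw [sub_ne_zero]
              intro hh
              apply hm
              have hcast : ((m' : ℕ) : ℂ) = ((j + 1 : ℕ) : ℂ) := by push_cast; exact hh.symm
              exact Nat.cast_injective hcast
            exact ((mul_eq_zero.1 h.symm).resolve_left hcoe)
      · exact raβ β hβ m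
    have hu : u ∈ hv.Hspan := (hv.mem_Hspan_iff_s14 u).2 hAll
    -- now the brackets with the H-parts vanish
    have hw1u : ⁅σ (hv.L 0 1) - hv.L 0 1, u⁆ = 0 := hv.lie_eq_zero_of_mem_Hspan hw1 hu
    have hw0u : ⁅σ (hv.L 0 0) - c⁻¹ • hv.L 0 0, u⁆ = 0 := hv.lie_eq_zero_of_mem_Hspan hw0 hu
    rw [hw1u, zero_add] at e1
    rw [hw0u, zero_add] at e2
    -- relations for the H-coefficients of u
    have rg0 : ∀ β : Γ, f (Sum.inr (β, 0)) = 0 := by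
      intro β
      have h := congrArg (fun v => hv.basis.repr v (Sum.inr (β, 0))) e1
      simp only [map_smul, Finsupp.smul_apply, smul_eq_mul] at h
      rw [hv.coeffA] at h
      exact (mul_eq_zero.1 h.symm).resolve_left hj1
    have rg1 : ∀ (β : Γ) (m : ℕ),
        (β : ℂ) * f (Sum.inr (β, m)) = ((j : ℂ) - (m : ℂ)) * f (Sum.inr (β, m + 1)) := by
      intro β m
      have h := congrArg (fun v => hv.basis.repr v (Sum.inr (β, m + 1))) e1
      simp only [map_smul, Finsupp.smul_apply, smul_eq_mul] at h
      rw [hv.coeffB] at h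
      rw [hf_def]; linear_combination h
    have rgβ : ∀ β : Γ, β ≠ 0 → ∀ m : ℕ, f (Sum.inr (β, m)) = 0 := by
      intro β hβ
      have hβc : (β : ℂ) ≠ 0 := fun h => hβ (ZeroMemClass.coe_eq_zero.mp h)
      exact kill_aux
        (hv.support_col_finite f (fun m => Sum.inr (β, m)) (fun a b h => by simpa using h))
        hβc (fun m => (j : ℂ) - (m : ℂ)) (fun m => rg1 β m)
    -- hence u is a multiple of H_{0,j+1}
    set g0 : ℂ := f (Sum.inr ((0 : Γ), j + 1)) with hg0_def
    have hu_eq : u = g0 • hv.H 0 (j + 1) := by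
      apply hv.basis.repr.injective
      ext k
      rw [map_smul, ← hv.basis_inr, Module.Basis.repr_self, Finsupp.smul_apply, smul_eq_mul,
        Finsupp.single_apply]
      by_cases hk : Sum.inr (((0 : Γ), j + 1) : ↥Γ × ℕ) = k
      · rw [if_pos hk, mul_one, ← hk]
      · rw [if_neg hk, mul_zero]
        have : f k = 0 := by
          rcases k with p | ⟨β, m⟩
          · exact hAll p
          · by_cases hβ : β = 0
            · subst hβ
              match m with
              | 0 => exact rg0 0
              | Nat.succ m' =>
                have hm : m' ≠ j := fun hh => hk (by rw [hh])
                have h := rg1 0 m'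
                rw [ZeroMemClass.coe_zero, zero_mul] at h
                have hcoe : ((j : ℂ) - (m' : ℂ)) ≠ 0 := by
                  rw [sub_ne_zero]
                  intro hh
                  exact hm (by exact_mod_cast hh.symm)
                exact (mul_eq_zero.1 h.symm).resolve_left hcoe
            · exact rgβ β hβ m
        rw [hf_def] at this
        exact this
    -- compute g0 from equation 2
    rw [hu_eq, lie_smul, bra0, smul_smul, smul_smul, smul_smul] at e2
    have hHne : hv.H 0 j ≠ 0 := by
      rw [← hv.basis_inr]; exact hv.basis.ne_zero _
    have hcoef : c⁻¹ * g0 * ((j : ℂ) + 1) = ((j : ℂ) + 1) * (e * c ^ j) :=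
      smul_left_injective ℂ hHne e2
    have hg0 : g0 = e * c ^ (j + 1) := by
      have h2 := congrArg (fun x => c * x) hcoef
      rw [show c * (c⁻¹ * g0 * ((j : ℂ) + 1)) = (c * c⁻¹) * (g0 * ((j : ℂ) + 1)) from by ring,
        mul_inv_cancel₀ hc0, one_mul] at h2
      have h3 : ((j : ℂ) + 1) * g0 = ((j : ℂ) + 1) * (e * c ^ (j + 1)) := by
        rw [pow_succ]; linear_combination h2
      exact mul_left_cancel₀ hj1 h3
    rw [hu_eq, hg0]

/-- Let `σ` be an automorphism of `HV` with `σ(L_{0,i}) ≡ c^{i-1} L_{0,i}`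
modulo `H` for all `i`, and `σ(H_{0,0}) = e H_{0,0}`.  Then `σ(H_{0,j}) = e c^j H_{0,j}` for
all `j ∈ ℤ₊`. -/
theorem HV_automorphism_on_H_0_j (Γ : AddSubgroup ℂ) (hΓ : Γ ≠ ⊥)
    {V : Type*} [LieRing V] [LieAlgebra ℂ V] (hv : HVData Γ V)
    (σ : V ≃ₗ⁅ℂ⁆ V) (c : ℂ) (hc0 : c ≠ 0) (e : ℂ) (he : e ≠ 0)
    (hL : ∀ i : ℕ, σ (hv.L 0 i) - c ^ ((i : ℤ) - 1) • hv.L 0 i ∈ hv.Hspan)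
    (hH0 : σ (hv.H 0 0) = e • hv.H 0 0) :
    ∀ j : ℕ, σ (hv.H 0 j) = (e * c ^ j) • hv.H 0 j :=
  HV_automorphism_on_H_0_j' Γ hv σ c hc0 e he hL hH0
end

section
/- Let σ be a Lie algebra automorphism of HV, c ∈ ℂ* with cΓ = Γ, τ: Γ → ℂ* a character, and e ∈ ℂ*, such that σ(L_{0,j}) − c^{j−1} L_{0,j} ∈ H for all j ∈ ℤ₊ and σ(H_{α,0}) = τ(α) e H_{cα,0} for all α ∈ Γ. Then σ(H_{α,j}) = τ(α) e c^{j} H_{cα,j} for all α ∈ Γ and j ∈ ℤ₊. -/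
section
variable {Γ : AddSubgroup ℂ} {V : Type*} [LieRing V] [LieAlgebra ℂ V]

/-- left bracket as linear map -/
def lbr (z : V) : V →ₗ[ℂ] V where
  toFun x := ⁅z, x⁆
  map_add' := lie_add z
  map_smul' a x := by simp [lie_smul]

def rbr (z : V) : V →ₗ[ℂ] V where
  toFun x := ⁅x, z⁆
  map_add' a b := add_lie a b z
  map_smul' a x := by simp [smul_lie]

noncomputable def cf (hv : HVData Γ V) (k : (↥Γ × ℕ) ⊕ (↥Γ × ℕ)) : V →ₗ[ℂ] ℂ :=
  (Finsupp.lapply k) ∘ₗ (hv.basis.repr : V →ₗ[ℂ] _)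

lemma cf_apply (hv : HVData Γ V) (k) (x : V) : cf hv k x = hv.basis.repr x k := rfl

lemma lie_Hspan_right (hv : HVData Γ V) (β : Γ) (m : ℕ) {h : V} (hh : h ∈ hv.Hspan) :
    ⁅h, hv.H β m⁆ = 0 := by
  induction hh using Submodule.span_induction with
  | mem x hx => obtain ⟨p, rfl⟩ := hx; exact hv.lie_H_H _ _ _ _
  | zero => simp
  | add x y _ _ hx hy => rw [add_lie, hx, hy, add_zero]
  | smul a x _ hx => rw [smul_lie, hx, smul_zero]

lemma lie_Hspan_both (hv : HVData Γ V) {h u : V} (hh : h ∈ hv.Hspan) (hu : u ∈ hv.Hspan) :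
    ⁅h, u⁆ = 0 := by
  induction hu using Submodule.span_induction with
  | mem x hx => obtain ⟨p, rfl⟩ := hx; exact lie_Hspan_right hv _ _ hh
  | zero => simp
  | add x y _ _ hx hy => rw [lie_add, hx, hy, add_zero]
  | smul a x _ hx => rw [lie_smul, hx, smul_zero]
end
section
variable {Γ : AddSubgroup ℂ} {V : Type*} [LieRing V] [LieAlgebra ℂ V]

lemma KL1 (hv : HVData Γ V) (β : Γ) (i : ℕ) (x : V) :
    hv.basis.repr ⁅hv.L 0 0, x⁆ (Sum.inr (β, i))
      = (β : ℂ) * hv.basis.repr x (Sum.inr (β, i))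
        + ((i : ℂ) + 1) * hv.basis.repr x (Sum.inr (β, i + 1)) := by
  have h : (cf hv (Sum.inr (β, i))) ∘ₗ lbr (hv.L 0 0)
      = (β : ℂ) • cf hv (Sum.inr (β, i)) + ((i : ℂ) + 1) • cf hv (Sum.inr (β, i + 1)) := by
    apply hv.basis.ext
    rintro (⟨β', i'⟩ | ⟨β', i'⟩) <;>
      simp only [LinearMap.comp_apply, lbr, LinearMap.coe_mk, AddHom.coe_mk,
        LinearMap.add_apply, LinearMap.smul_apply, hv.basis_inl, hv.basis_inr]
    · rw [hv.lie_L_L]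
      simp only [← hv.basis_inl]
      simp [cf_apply, Finsupp.single_apply]
    · rw [hv.lie_L_H]
      simp only [zero_add, ZeroMemClass.coe_zero]
      simp only [← hv.basis_inr]
      simp only [cf_apply, map_add, map_smul, Module.Basis.repr_self, Finsupp.coe_add,
        Finsupp.coe_smul, Pi.add_apply, Pi.smul_apply, Finsupp.single_apply, smul_eq_mul,
        Sum.inr.injEq, Prod.mk.injEq]
      rcases eq_or_ne β' β with rfl | hβ
      · simp only [true_and]
        rcases eq_or_ne i' (i + 1) with rfl | hi
        · have h1 : i + 1 - 1 = i := rfl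
          have h2 : ¬ (i + 1 = i) := by omega
          simp [h1, h2]
        · have h2 : ¬ (i' - 1 = i) ∨ i' = 0 := by omega
          rcases h2 with h2 | rfl
          · simp [hi, h2]
          · simp [hi]
      · simp [hβ]
  simpa [cf_apply, lbr] using LinearMap.congr_fun h x

lemma KL2 (hv : HVData Γ V) (β : Γ) (x : V) :
    hv.basis.repr ⁅hv.L 0 1, x⁆ (Sum.inr (β, 0)) = 0 := by
  have h : (cf hv (Sum.inr (β, 0))) ∘ₗ lbr (hv.L 0 1) = 0 := by
    apply hv.basis.ext
    rintro (⟨β', i'⟩ | ⟨β', i'⟩) <;>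
      simp only [LinearMap.comp_apply, lbr, LinearMap.coe_mk, AddHom.coe_mk,
        LinearMap.zero_apply, hv.basis_inl, hv.basis_inr]
    · rw [hv.lie_L_L]
      simp only [← hv.basis_inl]
      simp [cf_apply, Finsupp.single_apply]
    · rw [hv.lie_L_H]
      simp only [zero_add, ZeroMemClass.coe_zero]
      simp only [← hv.basis_inr]
      simp only [cf_apply, map_add, map_smul, Module.Basis.repr_self, Finsupp.coe_add,
        Finsupp.coe_smul, Pi.add_apply, Pi.smul_apply, Finsupp.single_apply, smul_eq_mul,
        Sum.inr.injEq, Prod.mk.injEq]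
      rcases eq_or_ne β' β with rfl | hβ
      · rcases Nat.eq_zero_or_pos i' with rfl | hi
        · simp
        · have h1 : ¬ (i' + 1 = 0) := by omega
          have h2 : ¬ (1 + i' - 1 = 0) := by omega
          simp [h1, h2]
      · simp [hβ]
  simpa [cf_apply, lbr] using LinearMap.congr_fun h x

lemma KL3 (hv : HVData Γ V) (γ β : Γ) (i : ℕ) (x : V) :
    hv.basis.repr ⁅x, hv.H γ 0⁆ (Sum.inr (β + γ, i))
      = (γ : ℂ) * hv.basis.repr x (Sum.inl (β, i)) := by
  have h : (cf hv (Sum.inr (β + γ, i))) ∘ₗ rbr (hv.H γ 0) = (γ : ℂ) • cf hv (Sum.inl (β, i)) := by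
    apply hv.basis.ext
    rintro (⟨β', i'⟩ | ⟨β', i'⟩) <;>
      simp only [LinearMap.comp_apply, rbr, LinearMap.coe_mk, AddHom.coe_mk,
        LinearMap.smul_apply, hv.basis_inl, hv.basis_inr]
    · rw [hv.lie_L_H]
      simp only [Nat.cast_zero, zero_smul, add_zero, Nat.add_zero]
      simp only [← hv.basis_inr, ← hv.basis_inl]
      simp only [cf_apply, map_smul, Module.Basis.repr_self, Finsupp.coe_smul, Pi.smul_apply,
        Finsupp.single_apply, smul_eq_mul, Sum.inr.injEq, Sum.inl.injEq, Prod.mk.injEq]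
      rcases eq_or_ne β' β with rfl | hβ
      · simp
      · have hne : ¬ (β' + γ = β + γ) := fun h => hβ (by exact add_right_cancel h)
        simp [hβ, hne]
    · rw [hv.lie_H_H]
      simp only [← hv.basis_inr]
      simp [cf_apply, Finsupp.single_apply]
  simpa [cf_apply, rbr] using LinearMap.congr_fun h x
end

/-- Let `σ` be an automorphism of `HV`, `c ∈ ℂ*` with `cΓ = Γ`, `τ` a
character, `e ∈ ℂ*`, with `σ(L_{0,j}) ≡ c^{j-1} L_{0,j}` modulo `H` for all `j` and
`σ(H_{α,0}) = τ(α) e H_{cα,0}` for all `α`.  Then `σ(H_{α,j}) = τ(α) e c^j H_{cα,j}` for all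
`α ∈ Γ`, `j ∈ ℤ₊`. -/
theorem HV_automorphism_on_H_alpha_j (Γ : AddSubgroup ℂ) (hΓ : Γ ≠ ⊥)
    {V : Type*} [LieRing V] [LieAlgebra ℂ V] (hv : HVData Γ V)
    (σ : V ≃ₗ⁅ℂ⁆ V) (c : ℂ) (hc0 : c ≠ 0)
    (hcΓ : ∀ x : ℂ, x ∈ Γ ↔ c * x ∈ Γ) (τ : Multiplicative ↥Γ →* ℂˣ)
    (e : ℂ) (he : e ≠ 0)
    (hL : ∀ j : ℕ, σ (hv.L 0 j) - c ^ ((j : ℤ) - 1) • hv.L 0 j ∈ hv.Hspan)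
    (hH0 : ∀ α : Γ, σ (hv.H α 0)
        = (charVal τ α * e) • hv.H ⟨c * (α : ℂ), (hcΓ (α : ℂ)).mp α.2⟩ 0) :
    ∀ (α : Γ) (j : ℕ), σ (hv.H α j)
        = (charVal τ α * e * c ^ j) • hv.H ⟨c * (α : ℂ), (hcΓ (α : ℂ)).mp α.2⟩ j := by
  classical
  obtain ⟨α₀, hα₀⟩ : ∃ α₀ : ↥Γ, α₀ ≠ 0 := by
    by_contra h
    push_neg at h
    exact hΓ ((AddSubgroup.eq_bot_iff_forall Γ).mpr fun x hx =>
      congrArg Subtype.val (h ⟨x, hx⟩))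
  have hτ : ∀ α : Γ, charVal τ α ≠ 0 := fun α => Units.ne_zero _
  have hchar0 : charVal τ 0 = 1 := by simp [charVal]
  have hcg0 : (⟨c * ((0 : Γ) : ℂ), (hcΓ _).mp (0 : Γ).2⟩ : Γ) = 0 := by
    apply Subtype.ext; simp
  have hzc : ∀ j : ℕ, c ^ ((j : ℤ) - 1) * c = c ^ j := by
    intro j; rw [← zpow_add_one₀ hc0, sub_add_cancel, zpow_natCast]
  have hbrA : ∀ (β : Γ) (j : ℕ), ⁅hv.L 0 j, hv.H β 0⁆ = (β : ℂ) • hv.H β j := by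
    intro β j; rw [hv.lie_L_H]; simp
  have hbr01 : ∀ j : ℕ, ⁅hv.L 0 j, hv.H 0 1⁆ = hv.H 0 j := by
    intro j; rw [hv.lie_L_H]; simp
  -- Part A : α ≠ 0
  have partA : ∀ (α : Γ), α ≠ 0 → ∀ j : ℕ,
      σ (hv.H α j) = (charVal τ α * e * c ^ j) • hv.H ⟨c * (α : ℂ), (hcΓ (α : ℂ)).mp α.2⟩ j := by
    intro α hα j
    set γ : Γ := ⟨c * (α : ℂ), (hcΓ (α : ℂ)).mp α.2⟩ with hγ
    have hαC : (α : ℂ) ≠ 0 := by simpa [ZeroMemClass.coe_eq_zero] using hα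
    have h1 : (α : ℂ) • σ (hv.H α j) = ⁅σ (hv.L 0 j), σ (hv.H α 0)⁆ := by
      rw [← LieEquiv.map_lie, hbrA]
      exact (map_smul σ.toLinearEquiv _ _).symm
    have hdec : σ (hv.L 0 j)
        = c ^ ((j : ℤ) - 1) • hv.L 0 j + (σ (hv.L 0 j) - c ^ ((j : ℤ) - 1) • hv.L 0 j) := by
      abel
    rw [hdec, hH0 α, add_lie, smul_lie, lie_smul, lie_smul,
      lie_Hspan_right hv _ _ (hL j), smul_zero, add_zero, hbrA] at h1
    have hγc : ((γ : Γ) : ℂ) = c * (α : ℂ) := rfl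
    rw [smul_smul, smul_smul, ← hγ] at h1
    have h2 : σ (hv.H α j)
        = ((α : ℂ)⁻¹ * (c ^ ((j : ℤ) - 1) * (charVal τ α * e) * (γ : ℂ))) • hv.H γ j := by
      calc σ (hv.H α j) = ((α : ℂ)⁻¹ * (α : ℂ)) • σ (hv.H α j) := by
            rw [inv_mul_cancel₀ hαC, one_smul]
        _ = (α : ℂ)⁻¹ • ((α : ℂ) • σ (hv.H α j)) := by rw [smul_smul]
        _ = _ := by rw [h1, smul_smul]
    rw [h2]
    congr 1
    rw [hγc]
    have heq : (α : ℂ)⁻¹ * (c ^ ((j : ℤ) - 1) * (charVal τ α * e) * (c * (α : ℂ)))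
        = (charVal τ α * e) * (c ^ ((j : ℤ) - 1) * c) * ((α : ℂ)⁻¹ * (α : ℂ)) := by ring
    rw [heq, hzc j, inv_mul_cancel₀ hαC, mul_one]
  -- the element y = σ (H 0 1)
  set y := σ (hv.H 0 1) with hy
  set γ₀ : Γ := ⟨c * (α₀ : ℂ), (hcΓ (α₀ : ℂ)).mp α₀.2⟩ with hγ₀def
  have hγ₀C : ((γ₀ : Γ) : ℂ) ≠ 0 :=
    mul_ne_zero hc0 (by simpa [ZeroMemClass.coe_eq_zero] using hα₀)
  have hy3 : ⁅y, hv.H γ₀ 0⁆ = 0 := by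
    have h0 : σ ⁅hv.H 0 1, hv.H α₀ 0⁆ = 0 := by
      rw [hv.lie_H_H]; exact map_zero σ.toLinearEquiv
    rw [LieEquiv.map_lie, hH0, lie_smul, ← hy, ← hγ₀def] at h0
    exact (smul_eq_zero.mp h0).resolve_left (mul_ne_zero (hτ α₀) he)
  have hinl : ∀ (β : Γ) (i : ℕ), hv.basis.repr y (Sum.inl (β, i)) = 0 := by
    intro β i
    have h := KL3 hv γ₀ β i y
    rw [hy3, map_zero] at h
    simp only [Finsupp.coe_zero, Pi.zero_apply] at h
    exact (mul_eq_zero.mp h.symm).resolve_left hγ₀C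
  have hyH : y ∈ hv.Hspan := by
    have him : hv.Hspan = Submodule.span ℂ (⇑hv.basis '' Set.range Sum.inr) := by
      unfold HVData.Hspan
      congr 1
      ext v
      constructor
      · rintro ⟨p, rfl⟩
        exact ⟨Sum.inr p, ⟨p, rfl⟩, hv.basis_inr p.1 p.2⟩
      · rintro ⟨_, ⟨p, rfl⟩, rfl⟩
        exact ⟨p, (hv.basis_inr p.1 p.2).symm⟩
    rw [him, Module.Basis.mem_span_image]
    intro k hk
    rcases k with ⟨β, i⟩ | p
    · exact absurd (hinl β i) (Finsupp.mem_support_iff.mp hk)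
    · exact ⟨p, rfl⟩
  have hσL : ∀ j : ℕ, ⁅σ (hv.L 0 j), y⁆ = c ^ ((j : ℤ) - 1) • ⁅hv.L 0 j, y⁆ := by
    intro j
    have hdec : σ (hv.L 0 j)
        = c ^ ((j : ℤ) - 1) • hv.L 0 j + (σ (hv.L 0 j) - c ^ ((j : ℤ) - 1) • hv.L 0 j) := by
      abel
    rw [hdec, add_lie, smul_lie, lie_Hspan_both hv (hL j) hyH, add_zero]
  have hl0 : ⁅hv.L 0 0, y⁆ = (c * e) • hv.H 0 0 := by
    have h0 : ⁅σ (hv.L 0 0), y⁆ = e • hv.H 0 0 := by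
      rw [hy, ← LieEquiv.map_lie]
      have hb : ⁅hv.L 0 0, hv.H 0 1⁆ = hv.H 0 0 := by rw [hv.lie_L_H]; simp
      rw [hb, hH0 0, hchar0, one_mul, hcg0]
    rw [hσL 0] at h0
    have hm : c ^ (((0 : ℕ) : ℤ) - 1) = c⁻¹ := by norm_num
    rw [hm] at h0
    calc ⁅hv.L 0 0, y⁆ = c • (c⁻¹ • ⁅hv.L 0 0, y⁆) := by
          rw [smul_smul, mul_inv_cancel₀ hc0, one_smul]
      _ = c • (e • hv.H 0 0) := by rw [h0]
      _ = (c * e) • hv.H 0 0 := by rw [smul_smul]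
  have hl1 : ⁅hv.L 0 1, y⁆ = y := by
    have h0 : ⁅σ (hv.L 0 1), y⁆ = y := by
      rw [hy, ← LieEquiv.map_lie, hbr01 1]
    rw [hσL 1] at h0
    simpa using h0
  set d := y - (c * e) • hv.H 0 1 with hd
  have hd0 : ⁅hv.L 0 0, d⁆ = 0 := by
    rw [hd, lie_sub, lie_smul, hl0]
    have hb : ⁅hv.L 0 0, hv.H 0 1⁆ = hv.H 0 0 := by rw [hv.lie_L_H]; simp
    rw [hb, sub_self]
  have hd1 : ⁅hv.L 0 1, d⁆ = d := by
    rw [hd, lie_sub, lie_smul, hl1, hbr01 1]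
  have hdinl : ∀ (β : Γ) (i : ℕ), hv.basis.repr d (Sum.inl (β, i)) = 0 := by
    intro β i
    rw [hd, map_sub, map_smul]
    rw [show hv.H 0 1 = hv.basis (Sum.inr (0, 1)) from (hv.basis_inr 0 1).symm]
    simp [hinl β i, Module.Basis.repr_self, Finsupp.single_apply]
  have hdinr : ∀ (β : Γ) (i : ℕ), hv.basis.repr d (Sum.inr (β, i)) = 0 := by
    intro β i
    induction i with
    | zero => have h := KL2 hv β d; rwa [hd1] at h
    | succ n ih =>
      have h := KL1 hv β n d
      rw [hd0, map_zero, ih] at h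
      simp only [Finsupp.coe_zero, Pi.zero_apply, mul_zero, zero_add] at h
      exact (mul_eq_zero.mp h.symm).resolve_left (Nat.cast_add_one_ne_zero n)
  have hdz : y = (c * e) • hv.H 0 1 := by
    have hr : hv.basis.repr d = 0 := by
      ext k
      rcases k with ⟨β, i⟩ | ⟨β, i⟩
      · simpa using hdinl β i
      · simpa using hdinr β i
    have : d = 0 := (LinearEquiv.map_eq_zero_iff hv.basis.repr).mp hr
    rw [hd] at this
    exact sub_eq_zero.mp this
  -- conclusion
  intro α j
  rcases eq_or_ne α 0 with rfl | hα
  · have h1 : σ (hv.H 0 j) = ⁅σ (hv.L 0 j), y⁆ := by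
      rw [hy, ← LieEquiv.map_lie, hbr01 j]
    rw [hσL j, hdz, lie_smul, hbr01 j, smul_smul] at h1
    rw [h1, hchar0, one_mul, hcg0]
    congr 1
    rw [show c ^ ((j : ℤ) - 1) * (c * e) = (c ^ ((j : ℤ) - 1) * c) * e by ring, hzc j]
    ring
  · exact partA α hα j
end

section
/- The second cohomology group of HV with trivial coefficients vanishes: H²(HV, ℂ) = 0. Equivalently, every 2-cocycle ψ on HV is a 2-coboundary, i.e., there exists a linear function f: HV → ℂ with ψ(x,y) = f([x,y]) for all x, y ∈ HV; hence HV has no nontrivial one-dimensional central extensions. -/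
/-- Auxiliary combinatorial lemma: if `c·F(i,j) + i·F(i-1,j) + j·F(i,j-1) = 0` for all
`i, j`, then `F` vanishes identically. -/
lemma HVaux_rec_zero (c : ℂ) (F : ℕ → ℕ → ℂ)
    (h : ∀ i j : ℕ, c * F i j + (i : ℂ) * F (i - 1) j + (j : ℂ) * F i (j - 1) = 0) :
    ∀ i j, F i j = 0 := by
  by_cases hc : c = 0
  · subst hc
    have key : ∀ j i, F i j = 0 := by
      intro j
      induction j with
      | zero =>
        intro i
        have h1 := h (i + 1) 0
        simp only [zero_mul, zero_add, Nat.add_sub_cancel, Nat.cast_zero, add_zero,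
          Nat.cast_add, Nat.cast_one] at h1
        exact (mul_eq_zero.mp h1).resolve_left (Nat.cast_add_one_ne_zero i)
      | succ j ih =>
        intro i
        have h1 := h (i + 1) (j + 1)
        rw [Nat.add_sub_cancel, Nat.add_sub_cancel, ih (i + 1)] at h1
        simp only [zero_mul, zero_add, mul_zero, add_zero, Nat.cast_add, Nat.cast_one] at h1
        exact (mul_eq_zero.mp h1).resolve_left (Nat.cast_add_one_ne_zero i)
    exact fun i j => key j i
  · have key : ∀ n i j, i + j = n → F i j = 0 := by
      intro n
      induction n using Nat.strong_induction_on with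
      | _ n ih =>
        intro i j hij
        have h1 := h i j
        have h2 : (i : ℂ) * F (i - 1) j = 0 := by
          cases i with
          | zero => simp
          | succ i' =>
            rw [Nat.add_sub_cancel, ih (i' + j) (by omega) i' j rfl, mul_zero]
        have h3 : (j : ℂ) * F i (j - 1) = 0 := by
          cases j with
          | zero => simp
          | succ j' =>
            rw [Nat.add_sub_cancel, ih (i + j') (by omega) i j' rfl, mul_zero]
        have h4 : c * F i j = 0 := by linear_combination h1 - h2 - h3
        exact (mul_eq_zero.mp h4).resolve_left hc
    exact fun i j => key (i + j) i j rfl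

/-- Auxiliary triangular solver: solves `c·g(i) + i·g(i-1) = q(i)` when `c ≠ 0`. -/
noncomputable def HVaux_solveFun (c : ℂ) (q : ℕ → ℂ) : ℕ → ℂ
  | 0 => q 0 / c
  | n + 1 => (q (n + 1) - ((n : ℂ) + 1) * HVaux_solveFun c q n) / c

lemma HVaux_solve (c : ℂ) (q : ℕ → ℂ) (h0 : c = 0 → q 0 = 0) :
    ∃ g : ℕ → ℂ, ∀ i : ℕ, c * g i + (i : ℂ) * g (i - 1) = q i := by
  by_cases hc : c = 0
  · subst hc
    refine ⟨fun n => q (n + 1) / ((n : ℂ) + 1), fun i => ?_⟩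
    cases i with
    | zero => simpa using (h0 rfl).symm
    | succ n =>
      simp only [zero_mul, zero_add, Nat.add_sub_cancel, Nat.cast_add, Nat.cast_one]
      rw [mul_comm, div_mul_cancel₀ _ (Nat.cast_add_one_ne_zero n)]
  · refine ⟨HVaux_solveFun c q, fun i => ?_⟩
    cases i with
    | zero =>
      simp only [HVaux_solveFun, Nat.cast_zero, zero_mul, add_zero]
      field_simp
    | succ n =>
      rw [Nat.add_sub_cancel]
      show c * ((q (n + 1) - ((n : ℂ) + 1) * HVaux_solveFun c q n) / c)
          + ((n + 1 : ℕ) : ℂ) * HVaux_solveFun c q n = q (n + 1)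
      push_cast
      field_simp
      ring

/-- `H²(HV, ℂ) = 0`: every 2-cocycle on `HV` is a 2-coboundary, i.e. for
every bilinear skew-symmetric `ψ` satisfying the cocycle identity there is a linear
`f : HV → ℂ` with `ψ(x,y) = f([x,y])`; hence `HV` has no nontrivial one-dimensional central
extensions. -/
theorem HV_second_cohomology_trivial (Γ : AddSubgroup ℂ) (hΓ : Γ ≠ ⊥)
    {V : Type*} [LieRing V] [LieAlgebra ℂ V] (hv : HVData Γ V)
    (ψ : V →ₗ[ℂ] V →ₗ[ℂ] ℂ)
    (hskew : ∀ x y : V, ψ x y = - ψ y x)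
    (hcocycle : ∀ x y z : V, ψ x ⁅y, z⁆ + ψ y ⁅z, x⁆ + ψ z ⁅x, y⁆ = 0) :
    ∃ f : V →ₗ[ℂ] ℂ, ∀ x y : V, ψ x y = f ⁅x, y⁆ := by
  classical
  -- a nonzero element of Γ
  obtain ⟨γ, hγ⟩ : ∃ γ : Γ, (γ : ℂ) ≠ 0 := by
    by_contra hco
    push_neg at hco
    exact hΓ ((AddSubgroup.eq_bot_iff_forall Γ).mpr fun x hx => hco ⟨x, hx⟩)
  have hψself : ∀ x : V, ψ x x = 0 := by
    intro x
    have h := hskew x x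
    linear_combination h / 2
  -- H 0 0 is central
  have hH00 : ∀ v : V, ⁅v, hv.H 0 0⁆ = 0 := by
    let m : V →ₗ[ℂ] V :=
      { toFun := fun x => ⁅x, hv.H 0 0⁆
        map_add' := fun a b => add_lie a b _
        map_smul' := fun c a => smul_lie c a _ }
    have hm : m = (0 : V →ₗ[ℂ] V) := by
      apply hv.basis.ext
      rintro (⟨β, j⟩ | ⟨β, j⟩)
      · show ⁅hv.basis (Sum.inl (β, j)), hv.H 0 0⁆ = _
        rw [hv.basis_inl, hv.lie_L_H]
        simp
      · show ⁅hv.basis (Sum.inr (β, j)), hv.H 0 0⁆ = _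
        rw [hv.basis_inr, hv.lie_H_H]
        simp
    intro v
    have := LinearMap.ext_iff.mp hm v
    simpa [m] using this
  -- ψ (L 0 0) (H 0 0) = 0, via perfectness
  have hLLγ : ⁅hv.L γ 0, hv.L (-γ) 0⁆ = (-(γ : ℂ) - (γ : ℂ)) • hv.L 0 0 := by
    rw [hv.lie_L_L]
    simp
  have hψHL : ψ (hv.H 0 0) (hv.L 0 0) = 0 := by
    have hc := hcocycle (hv.L γ 0) (hv.L (-γ) 0) (hv.H 0 0)
    have hzx : ⁅hv.H 0 0, hv.L γ 0⁆ = 0 := by rw [← lie_skew, hH00, neg_zero]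
    rw [hH00, hzx, hLLγ] at hc
    simp only [map_zero, map_smul, smul_eq_mul, zero_add, LinearMap.zero_apply] at hc
    have hne : (-(γ : ℂ) - (γ : ℂ)) ≠ 0 := by
      intro h
      exact hγ (by linear_combination -h / 2)
    exact (mul_eq_zero.mp hc).resolve_left hne
  have hψLH : ψ (hv.L 0 0) (hv.H 0 0) = 0 := by
    rw [hskew (hv.L 0 0) (hv.H 0 0), hψHL, neg_zero]
  -- construct the values of f on the basis
  have hsolL : ∀ β : Γ, ∃ g : ℕ → ℂ,
      ∀ i, (β : ℂ) * g i + (i : ℂ) * g (i - 1) = ψ (hv.L 0 0) (hv.L β i) := by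
    intro β
    apply HVaux_solve
    intro hβ0
    have hb : β = 0 := ZeroMemClass.coe_eq_zero.mp hβ0
    rw [hb]
    exact hψself _
  have hsolH : ∀ β : Γ, ∃ g : ℕ → ℂ,
      ∀ i, (β : ℂ) * g i + (i : ℂ) * g (i - 1) = ψ (hv.L 0 0) (hv.H β i) := by
    intro β
    apply HVaux_solve
    intro hβ0
    have hb : β = 0 := ZeroMemClass.coe_eq_zero.mp hβ0
    rw [hb]
    exact hψLH
  choose gL hgL using hsolL
  choose gH hgH using hsolH
  set G : (↥Γ × ℕ) ⊕ (↥Γ × ℕ) → ℂ :=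
    Sum.elim (fun p : ↥Γ × ℕ => gL p.1 p.2) (fun p : ↥Γ × ℕ => gH p.1 p.2) with hGdef
  set f : V →ₗ[ℂ] ℂ := hv.basis.constr ℂ G with hfdef
  have hfL : ∀ (β : Γ) (i : ℕ), f (hv.L β i) = gL β i := by
    intro β i
    rw [← hv.basis_inl]
    exact hv.basis.constr_basis ℂ G (Sum.inl (β, i))
  have hfH : ∀ (β : Γ) (i : ℕ), f (hv.H β i) = gH β i := by
    intro β i
    rw [← hv.basis_inr]
    exact hv.basis.constr_basis ℂ G (Sum.inr (β, i))
  refine ⟨f, ?_⟩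
  -- the modified cocycle Φ
  let brk : V →ₗ[ℂ] V →ₗ[ℂ] V :=
    { toFun := fun x =>
        { toFun := fun y => ⁅x, y⁆
          map_add' := fun a b => lie_add x a b
          map_smul' := fun c a => lie_smul c x a }
      map_add' := fun a b => LinearMap.ext fun y => add_lie a b y
      map_smul' := fun c a => LinearMap.ext fun y => smul_lie c a y }
  let Φ : V →ₗ[ℂ] V →ₗ[ℂ] ℂ := ψ - LinearMap.compr₂ brk f
  have hΦapply : ∀ x y : V, Φ x y = ψ x y - f ⁅x, y⁆ := fun x y => rfl
  have hΦskew : ∀ x y : V, Φ x y = -Φ y x := by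
    intro x y
    rw [hΦapply, hΦapply, hskew x y]
    have hl : ⁅x, y⁆ = -⁅y, x⁆ := (lie_skew x y).symm
    rw [hl, map_neg]
    ring
  have hΦcoc : ∀ x y z : V, Φ x ⁅y, z⁆ + Φ y ⁅z, x⁆ + Φ z ⁅x, y⁆ = 0 := by
    intro x y z
    rw [hΦapply, hΦapply, hΦapply]
    have hfJ : f ⁅x, ⁅y, z⁆⁆ + f ⁅y, ⁅z, x⁆⁆ + f ⁅z, ⁅x, y⁆⁆ = 0 := by
      rw [← map_add, ← map_add, lie_jacobi, map_zero]
    linear_combination hcocycle x y z - hfJ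
  -- Φ (L 0 0) vanishes
  have hΦL00 : ∀ v : V, Φ (hv.L 0 0) v = 0 := by
    have hext : Φ (hv.L 0 0) = (0 : V →ₗ[ℂ] ℂ) := by
      apply hv.basis.ext
      rintro (⟨β, j⟩ | ⟨β, j⟩)
      · rw [hv.basis_inl, LinearMap.zero_apply, hΦapply, hv.lie_L_L]
        rw [map_add, map_smul, map_smul]
        simp only [zero_add, smul_eq_mul, ZeroMemClass.coe_zero, Nat.cast_zero, sub_zero]
        rw [hfL, hfL]
        linear_combination - hgL β j
      · rw [hv.basis_inr, LinearMap.zero_apply, hΦapply, hv.lie_L_H]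
        rw [map_add, map_smul, map_smul]
        simp only [zero_add, smul_eq_mul]
        rw [hfH, hfH]
        linear_combination - hgH β j
    intro v
    rw [hext, LinearMap.zero_apply]
  -- invariance under ad (L 0 0)
  have hinv : ∀ x y : V, Φ ⁅hv.L 0 0, x⁆ y + Φ x ⁅hv.L 0 0, y⁆ = 0 := by
    intro x y
    have hc := hΦcoc (hv.L 0 0) x y
    rw [hΦL00] at hc
    have h2 : Φ x ⁅y, hv.L 0 0⁆ = -Φ x ⁅hv.L 0 0, y⁆ := by
      have hl : ⁅y, hv.L 0 0⁆ = -⁅hv.L 0 0, y⁆ := (lie_skew y (hv.L 0 0)).symm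
      rw [hl, map_neg]
    have h3 : Φ y ⁅hv.L 0 0, x⁆ = -Φ ⁅hv.L 0 0, x⁆ y := hΦskew y _
    rw [h2, h3] at hc
    linear_combination -hc
  -- action of ad (L 0 0) on basis vectors
  have hDL : ∀ (β : Γ) (j : ℕ),
      ⁅hv.L 0 0, hv.L β j⁆ = (β : ℂ) • hv.L β j + (j : ℂ) • hv.L β (j - 1) := by
    intro β j
    rw [hv.lie_L_L]
    simp
  have hDH : ∀ (β : Γ) (j : ℕ),
      ⁅hv.L 0 0, hv.H β j⁆ = (β : ℂ) • hv.H β j + (j : ℂ) • hv.H β (j - 1) := by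
    intro β j
    rw [hv.lie_L_H]
    simp
  -- Φ vanishes on all basis pairs
  have hbasis0 : ∀ s t, Φ (hv.basis s) (hv.basis t) = 0 := by
    rintro (⟨α, i⟩ | ⟨α, i⟩) (⟨β, j⟩ | ⟨β, j⟩)
    · rw [hv.basis_inl, hv.basis_inl]
      refine HVaux_rec_zero ((α : ℂ) + (β : ℂ))
        (fun i j => Φ (hv.L α i) (hv.L β j)) ?_ i j
      intro i j
      have h := hinv (hv.L α i) (hv.L β j)
      rw [hDL, hDL] at h
      simp only [map_add, map_smul, LinearMap.add_apply, LinearMap.smul_apply,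
        smul_eq_mul] at h
      linear_combination h
    · rw [hv.basis_inl, hv.basis_inr]
      refine HVaux_rec_zero ((α : ℂ) + (β : ℂ))
        (fun i j => Φ (hv.L α i) (hv.H β j)) ?_ i j
      intro i j
      have h := hinv (hv.L α i) (hv.H β j)
      rw [hDL, hDH] at h
      simp only [map_add, map_smul, LinearMap.add_apply, LinearMap.smul_apply,
        smul_eq_mul] at h
      linear_combination h
    · rw [hv.basis_inr, hv.basis_inl]
      refine HVaux_rec_zero ((α : ℂ) + (β : ℂ))
        (fun i j => Φ (hv.H α i) (hv.L β j)) ?_ i j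
      intro i j
      have h := hinv (hv.H α i) (hv.L β j)
      rw [hDH, hDL] at h
      simp only [map_add, map_smul, LinearMap.add_apply, LinearMap.smul_apply,
        smul_eq_mul] at h
      linear_combination h
    · rw [hv.basis_inr, hv.basis_inr]
      refine HVaux_rec_zero ((α : ℂ) + (β : ℂ))
        (fun i j => Φ (hv.H α i) (hv.H β j)) ?_ i j
      intro i j
      have h := hinv (hv.H α i) (hv.H β j)
      rw [hDH, hDH] at h
      simp only [map_add, map_smul, LinearMap.add_apply, LinearMap.smul_apply,
        smul_eq_mul] at h
      linear_combination h
  have hΦ0 : Φ = 0 := by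
    apply hv.basis.ext
    intro s
    apply hv.basis.ext
    intro t
    rw [LinearMap.zero_apply, LinearMap.zero_apply]
    exact hbasis0 s t
  intro x y
  have h := hΦapply x y
  rw [hΦ0] at h
  simp only [LinearMap.zero_apply] at h
  linear_combination -h
end

section
/- Assume 1 ∈ Γ. For every 2-cocycle ψ on HV there exists a linear function f: HV → ℂ such that the 2-cocycle φ = ψ − ψ_f satisfies φ(L_{α,i}, H_{β,j}) = 0 for all α, β ∈ Γ and i, j ∈ ℤ₊. -/
section HVaux

variable {Γ : AddSubgroup ℂ} {V : Type*} [LieRing V] [LieAlgebra ℂ V]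

/-- Abbreviation for the cocycle values `ψ(L_{a,i}, H_{b,k})`. -/
noncomputable def HVg (hv : HVData Γ V) (ψ : V →ₗ[ℂ] V →ₗ[ℂ] ℂ)
    (a : Γ) (i : ℕ) (b : Γ) (k : ℕ) : ℂ :=
  ψ (hv.L a i) (hv.H b k)

open scoped Classical in
/-- The coefficients of the normalizing linear functional on the `H`-part. -/
noncomputable def HVc (hv : HVData Γ V) (ψ : V →ₗ[ℂ] V →ₗ[ℂ] ℂ) (d : Γ) : ℕ → ℂ :=
  if (d : ℂ) = 0 then fun m => HVg hv ψ 0 0 0 (m + 1) / ((m : ℂ) + 1)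
  else Nat.rec (HVg hv ψ 0 0 d 0 / (d : ℂ))
    (fun m cm => (HVg hv ψ 0 0 d (m + 1) - ((m : ℂ) + 1) * cm) / (d : ℂ))

lemma HVc_zero (hv : HVData Γ V) (ψ : V →ₗ[ℂ] V →ₗ[ℂ] ℂ) {d : Γ} (h : (d : ℂ) = 0) (m : ℕ) :
    HVc hv ψ d m = HVg hv ψ 0 0 0 (m + 1) / ((m : ℂ) + 1) := by
  simp only [HVc]; rw [if_pos h]

lemma HVc_nz_zero (hv : HVData Γ V) (ψ : V →ₗ[ℂ] V →ₗ[ℂ] ℂ) {d : Γ} (h : (d : ℂ) ≠ 0) :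
    HVc hv ψ d 0 = HVg hv ψ 0 0 d 0 / (d : ℂ) := by
  simp only [HVc]; rw [if_neg h]; rfl

lemma HVc_nz_succ (hv : HVData Γ V) (ψ : V →ₗ[ℂ] V →ₗ[ℂ] ℂ) {d : Γ} (h : (d : ℂ) ≠ 0) (m : ℕ) :
    HVc hv ψ d (m + 1)
      = (HVg hv ψ 0 0 d (m + 1) - ((m : ℂ) + 1) * HVc hv ψ d m) / (d : ℂ) := by
  simp only [HVc]; rw [if_neg h]

/-- The key cocycle identity obtained from the triple `(L₀₀, L_{a,i}, H_{b,k})`. -/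
lemma HVkey (hv : HVData Γ V) (ψ : V →ₗ[ℂ] V →ₗ[ℂ] ℂ)
    (hskew : ∀ x y : V, ψ x y = - ψ y x)
    (hcocycle : ∀ x y z : V, ψ x ⁅y, z⁆ + ψ y ⁅z, x⁆ + ψ z ⁅x, y⁆ = 0)
    (a b : Γ) (i k : ℕ) :
    ((a : ℂ) + (b : ℂ)) * HVg hv ψ a i b k + (k : ℂ) * HVg hv ψ a i b (k - 1)
        + (i : ℂ) * HVg hv ψ a (i - 1) b k
      = (b : ℂ) * HVg hv ψ 0 0 (a + b) (i + k)
        + (k : ℂ) * HVg hv ψ 0 0 (a + b) (i + k - 1) := by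
  have h := hcocycle (hv.L 0 0) (hv.L a i) (hv.H b k)
  have e2 : ⁅hv.H b k, hv.L 0 0⁆ = -((b : ℂ) • hv.H b k + (k : ℂ) • hv.H b (k - 1)) := by
    rw [← lie_skew, hv.lie_L_H]
    simp
  have e3 : ⁅hv.L 0 0, hv.L a i⁆ = (a : ℂ) • hv.L a i + (i : ℂ) • hv.L a (i - 1) := by
    rw [hv.lie_L_L]
    simp
  rw [hv.lie_L_H a b i k, e2, e3] at h
  simp only [map_add, map_smul, map_neg, smul_eq_mul] at h
  rw [hskew (hv.H b k) (hv.L a i), hskew (hv.H b k) (hv.L a (i - 1))] at h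
  simp only [HVg]
  linear_combination -h

/-- `φ(d,m) = d·c(d,m) + m·c(d,m-1)`, valid for all `d` once `φ(0,0)=0`. -/
lemma HVphi_eq (hv : HVData Γ V) (ψ : V →ₗ[ℂ] V →ₗ[ℂ] ℂ)
    (hφ0 : HVg hv ψ 0 0 0 0 = 0) (d : Γ) (m : ℕ) :
    HVg hv ψ 0 0 d m = (d : ℂ) * HVc hv ψ d m + (m : ℂ) * HVc hv ψ d (m - 1) := by
  by_cases h : (d : ℂ) = 0
  · have hd : d = 0 := ZeroMemClass.coe_eq_zero.mp h
    subst hd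
    cases m with
    | zero => simpa [h] using hφ0
    | succ m' =>
      rw [show m' + 1 - 1 = m' from rfl, HVc_zero hv ψ h m', h]
      have hne : ((m' : ℂ) + 1) ≠ 0 := Nat.cast_add_one_ne_zero m'
      push_cast
      field_simp
      ring
  · cases m with
    | zero =>
      rw [HVc_nz_zero hv ψ h]
      push_cast
      field_simp
      ring
    | succ m' =>
      rw [show m' + 1 - 1 = m' from rfl, HVc_nz_succ hv ψ h m']
      push_cast
      field_simp
      ring

lemma HVphi00 (hv : HVData Γ V) (ψ : V →ₗ[ℂ] V →ₗ[ℂ] ℂ)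
    (hskew : ∀ x y : V, ψ x y = - ψ y x)
    (hcocycle : ∀ x y z : V, ψ x ⁅y, z⁆ + ψ y ⁅z, x⁆ + ψ z ⁅x, y⁆ = 0)
    (h1 : (1 : ℂ) ∈ Γ) : HVg hv ψ 0 0 0 0 = 0 := by
  have h := HVkey hv ψ hskew hcocycle ⟨1, h1⟩ (-⟨1, h1⟩) 0 0
  have e : (⟨1, h1⟩ + -⟨1, h1⟩ : Γ) = 0 := by simp
  rw [e] at h
  simp only [AddSubgroup.coe_neg, Nat.cast_zero] at h
  norm_num at h
  exact h

lemma HVmain (hv : HVData Γ V) (ψ : V →ₗ[ℂ] V →ₗ[ℂ] ℂ)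
    (hskew : ∀ x y : V, ψ x y = - ψ y x)
    (hcocycle : ∀ x y z : V, ψ x ⁅y, z⁆ + ψ y ⁅z, x⁆ + ψ z ⁅x, y⁆ = 0)
    (h1 : (1 : ℂ) ∈ Γ) (a b : Γ) (i k : ℕ) :
    HVg hv ψ a i b k
      = (b : ℂ) * HVc hv ψ (a + b) (i + k) + (k : ℂ) * HVc hv ψ (a + b) (i + k - 1) := by
  have hφ0 := HVphi00 hv ψ hskew hcocycle h1
  have PHI := HVphi_eq hv ψ hφ0
  by_cases hd : (a : ℂ) + (b : ℂ) = 0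
  · -- degree-zero case: induction on `i`, generalizing `k`.
    induction i generalizing k with
    | zero =>
      have hk := HVkey hv ψ hskew hcocycle a b 0 (k + 1)
      have P1 := PHI (a + b) (k + 1)
      have P2 := PHI (a + b) k
      simp only [Nat.add_sub_cancel, Nat.zero_add, Nat.zero_sub] at hk P1 ⊢
      push_cast at hk P1 P2 ⊢
      rw [hd] at hk P1 P2
      have hne : ((k : ℂ) + 1) ≠ 0 := Nat.cast_add_one_ne_zero k
      have hz : ((k : ℂ) + 1) * (HVg hv ψ a 0 b k
          - ((b : ℂ) * HVc hv ψ (a + b) k + (k : ℂ) * HVc hv ψ (a + b) (k - 1))) = 0 := by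
        linear_combination hk + (b : ℂ) * P1 + ((k : ℂ) + 1) * P2
      linear_combination (mul_eq_zero.mp hz).resolve_left hne
    | succ i hIH =>
      have hk := HVkey hv ψ hskew hcocycle a b (i + 1) (k + 1)
      have P1 := PHI (a + b) (i + k + 2)
      have P2 := PHI (a + b) (i + k + 1)
      have IHb := hIH (k + 1)
      simp only [Nat.add_sub_cancel] at hk P1 P2 IHb ⊢
      simp only [show i + 1 + (k + 1) = i + k + 2 from by omega,
        show i + 1 + (k + 1) - 1 = i + k + 1 from by omega,
        show i + (k + 1) = i + k + 1 from by omega,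
        show i + 1 + k = i + k + 1 from by omega,
        show i + 1 + k - 1 = i + k from by omega,
        show i + k + 2 - 1 = i + k + 1 from by omega,
        show i + k + 1 - 1 = i + k from by omega] at hk P1 P2 IHb ⊢
      push_cast at hk P1 P2 IHb ⊢
      rw [hd] at hk P1 P2
      have hne : ((k : ℂ) + 1) ≠ 0 := Nat.cast_add_one_ne_zero k
      have hz : ((k : ℂ) + 1) * (HVg hv ψ a (i + 1) b k
          - ((b : ℂ) * HVc hv ψ (a + b) (i + k + 1)
            + (k : ℂ) * HVc hv ψ (a + b) (i + k))) = 0 := by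
        linear_combination hk + (b : ℂ) * P1 + ((k : ℂ) + 1) * P2 - ((i : ℂ) + 1) * IHb
      linear_combination (mul_eq_zero.mp hz).resolve_left hne
  · -- nonzero-degree case: strong induction on `i + k`.
    have main : ∀ n i k, i + k = n →
        HVg hv ψ a i b k
          = (b : ℂ) * HVc hv ψ (a + b) (i + k)
            + (k : ℂ) * HVc hv ψ (a + b) (i + k - 1) := by
      intro n
      induction n using Nat.strong_induction_on with
      | _ n ih =>
        intro i k hn
        rcases i with _ | i <;> rcases k with _ | k
        · have hk := HVkey hv ψ hskew hcocycle a b 0 0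
          have P1 := PHI (a + b) 0
          simp only [Nat.zero_add, Nat.add_zero, Nat.zero_sub] at hk P1 ⊢
          push_cast at hk P1 ⊢
          have hz : ((a : ℂ) + (b : ℂ)) * (HVg hv ψ a 0 b 0
              - (b : ℂ) * HVc hv ψ (a + b) 0) = 0 := by
            linear_combination hk + (b : ℂ) * P1
          linear_combination (mul_eq_zero.mp hz).resolve_left hd
        · have hk := HVkey hv ψ hskew hcocycle a b 0 (k + 1)
          have P1 := PHI (a + b) (k + 1)
          have P2 := PHI (a + b) k
          have IH1 := ih k (by omega) 0 k (Nat.zero_add k)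
          simp only [Nat.add_sub_cancel, Nat.zero_add, Nat.zero_sub] at hk P1 P2 IH1 ⊢
          push_cast at hk P1 P2 IH1 ⊢
          have hz : ((a : ℂ) + (b : ℂ)) * (HVg hv ψ a 0 b (k + 1)
              - ((b : ℂ) * HVc hv ψ (a + b) (k + 1)
                + ((k : ℂ) + 1) * HVc hv ψ (a + b) k)) = 0 := by
            linear_combination hk + (b : ℂ) * P1 + ((k : ℂ) + 1) * P2 - ((k : ℂ) + 1) * IH1
          linear_combination (mul_eq_zero.mp hz).resolve_left hd
        · have hk := HVkey hv ψ hskew hcocycle a b (i + 1) 0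
          have P1 := PHI (a + b) (i + 1)
          have IH2 := ih i (by omega) i 0 rfl
          simp only [Nat.add_sub_cancel, Nat.add_zero, Nat.zero_sub] at hk P1 IH2 ⊢
          push_cast at hk P1 IH2 ⊢
          have hz : ((a : ℂ) + (b : ℂ)) * (HVg hv ψ a (i + 1) b 0
              - (b : ℂ) * HVc hv ψ (a + b) (i + 1)) = 0 := by
            linear_combination hk + (b : ℂ) * P1 - ((i : ℂ) + 1) * IH2
          linear_combination (mul_eq_zero.mp hz).resolve_left hd
        · have hk := HVkey hv ψ hskew hcocycle a b (i + 1) (k + 1)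
          have P1 := PHI (a + b) (i + k + 2)
          have P2 := PHI (a + b) (i + k + 1)
          have IHa := ih (i + k + 1) (by omega) (i + 1) k (by omega)
          have IHb := ih (i + k + 1) (by omega) i (k + 1) (by omega)
          simp only [Nat.add_sub_cancel] at hk P1 P2 IHa IHb ⊢
          simp only [show i + 1 + (k + 1) = i + k + 2 from by omega,
            show i + 1 + (k + 1) - 1 = i + k + 1 from by omega,
            show i + (k + 1) = i + k + 1 from by omega,
            show i + 1 + k = i + k + 1 from by omega,
            show i + 1 + k - 1 = i + k from by omega,
            show i + k + 2 - 1 = i + k + 1 from by omega,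
            show i + k + 1 - 1 = i + k from by omega] at hk P1 P2 IHa IHb ⊢
          push_cast at hk P1 P2 IHa IHb ⊢
          have hz : ((a : ℂ) + (b : ℂ)) * (HVg hv ψ a (i + 1) b (k + 1)
              - ((b : ℂ) * HVc hv ψ (a + b) (i + k + 2)
                + ((k : ℂ) + 1) * HVc hv ψ (a + b) (i + k + 1))) = 0 := by
            linear_combination hk + (b : ℂ) * P1 + ((k : ℂ) + 1) * P2
              - ((k : ℂ) + 1) * IHa - ((i : ℂ) + 1) * IHb
          linear_combination (mul_eq_zero.mp hz).resolve_left hd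
    exact main (i + k) i k rfl

end HVaux


/-- Assume `1 ∈ Γ`.  For every 2-cocycle `ψ` on `HV` there is a linear
`f : HV → ℂ` such that `φ = ψ - ψ_f` satisfies `φ(L_{α,i}, H_{β,j}) = 0` for all
`α, β ∈ Γ` and `i, j ∈ ℤ₊`. -/
theorem HV_cocycle_L_H_vanishes (Γ : AddSubgroup ℂ) (hΓ : Γ ≠ ⊥) (h1 : (1 : ℂ) ∈ Γ)
    {V : Type*} [LieRing V] [LieAlgebra ℂ V] (hv : HVData Γ V)
    (ψ : V →ₗ[ℂ] V →ₗ[ℂ] ℂ)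
    (hskew : ∀ x y : V, ψ x y = - ψ y x)
    (hcocycle : ∀ x y z : V, ψ x ⁅y, z⁆ + ψ y ⁅z, x⁆ + ψ z ⁅x, y⁆ = 0) :
    ∃ f : V →ₗ[ℂ] ℂ, ∀ (α β : Γ) (i j : ℕ),
      ψ (hv.L α i) (hv.H β j) - f ⁅hv.L α i, hv.H β j⁆ = 0 := by
  refine ⟨hv.basis.constr ℂ (Sum.elim (fun _ => (0 : ℂ)) fun p => HVc hv ψ p.1 p.2), ?_⟩
  intro α β i j
  have hf : ∀ (b : Γ) (k : ℕ),
      (hv.basis.constr ℂ (Sum.elim (fun _ => (0 : ℂ)) fun p => HVc hv ψ p.1 p.2)) (hv.H b k)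
        = HVc hv ψ b k := by
    intro b k
    rw [← hv.basis_inr b k, Module.Basis.constr_basis]
    rfl
  rw [hv.lie_L_H, map_add, map_smul, map_smul, hf, hf]
  have hm := HVmain hv ψ hskew hcocycle h1 α β i j
  simp only [HVg] at hm
  simp only [smul_eq_mul]
  linear_combination hm
end

section
/- Assume 1 ∈ Γ. For every 2-cocycle ψ on HV there exists a linear function f: HV → ℂ such that the 2-cocycle φ = ψ − ψ_f satisfies φ(H_{α,i}, H_{β,j}) = 0 for all α, β ∈ Γ and i, j ∈ ℤ₊. -/
/-- Assume `1 ∈ Γ`.  For every 2-cocycle `ψ` on `HV` there is a linear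
`f : HV → ℂ` such that `φ = ψ - ψ_f` satisfies `φ(H_{α,i}, H_{β,j}) = 0` for all
`α, β ∈ Γ` and `i, j ∈ ℤ₊`. -/
theorem HV_cocycle_H_H_vanishes (Γ : AddSubgroup ℂ) (hΓ : Γ ≠ ⊥) (h1 : (1 : ℂ) ∈ Γ)
    {V : Type*} [LieRing V] [LieAlgebra ℂ V] (hv : HVData Γ V)
    (ψ : V →ₗ[ℂ] V →ₗ[ℂ] ℂ)
    (hskew : ∀ x y : V, ψ x y = - ψ y x)
    (hcocycle : ∀ x y z : V, ψ x ⁅y, z⁆ + ψ y ⁅z, x⁆ + ψ z ⁅x, y⁆ = 0) :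
    ∃ f : V →ₗ[ℂ] ℂ, ∀ (α β : Γ) (i j : ℕ),
      ψ (hv.H α i) (hv.H β j) - f ⁅hv.H α i, hv.H β j⁆ = 0 := by

  classical
  -- abbreviation for ψ(H α i, H β j)
  set g : Γ → ℕ → Γ → ℕ → ℂ := fun α i β j => ψ (hv.H α i) (hv.H β j) with hgdef
  -- Relation R1, from the cocycle identity with z = L 0 0
  have R1 : ∀ (α β : Γ) (i j : ℕ),
      ((α:ℂ) + (β:ℂ)) * g α i β j + (j:ℂ) * g α i β (j-1)
        + (i:ℂ) * g α (i-1) β j = 0 := by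
    intro α β i j
    have hc := hcocycle (hv.H α i) (hv.H β j) (hv.L 0 0)
    have h1 : ⁅hv.H β j, hv.L 0 0⁆
        = -((β:ℂ) • hv.H β j + (j:ℂ) • hv.H β (j-1)) := by
      rw [← lie_skew, hv.lie_L_H]
      simp
    have h2 : ⁅hv.L 0 0, hv.H α i⁆
        = (α:ℂ) • hv.H α i + (i:ℂ) • hv.H α (i-1) := by
      rw [hv.lie_L_H]
      simp
    rw [h1, h2, hv.lie_H_H] at hc
    simp only [map_add, map_smul, map_neg, smul_eq_mul, map_zero] at hc
    have s1 := hskew (hv.H β j) (hv.H α i)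
    have s2 := hskew (hv.H β j) (hv.H α (i-1))
    simp only [hgdef]
    linear_combination -hc + (α:ℂ) * s1 + (i:ℂ) * s2
  -- Relation R2, from the cocycle identity with z = L 0 1
  have R2 : ∀ (α β : Γ) (i j : ℕ),
      (β:ℂ) * g α i β (j+1) + (α:ℂ) * g α (i+1) β j
        + ((i:ℂ) + (j:ℂ)) * g α i β j = 0 := by
    intro α β i j
    have hc := hcocycle (hv.H α i) (hv.H β j) (hv.L 0 1)
    have h1 : ⁅hv.H β j, hv.L 0 1⁆
        = -((β:ℂ) • hv.H β (j+1) + (j:ℂ) • hv.H β j) := by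
      rw [← lie_skew, hv.lie_L_H]
      simp [Nat.add_comm]
    have h2 : ⁅hv.L 0 1, hv.H α i⁆
        = (α:ℂ) • hv.H α (i+1) + (i:ℂ) • hv.H α i := by
      rw [hv.lie_L_H]
      simp [Nat.add_comm]
    rw [h1, h2, hv.lie_H_H] at hc
    simp only [map_add, map_smul, map_neg, smul_eq_mul, map_zero] at hc
    have s1 := hskew (hv.H β j) (hv.H α (i+1))
    have s2 := hskew (hv.H β j) (hv.H α i)
    simp only [hgdef]
    linear_combination -hc + (α:ℂ) * s1 + (i:ℂ) * s2
  -- main claim, by strong induction on i + j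
  have key : ∀ n : ℕ, ∀ i j : ℕ, i + j = n → ∀ α β : Γ, g α i β j = 0 := by
    intro n
    induction n using Nat.strong_induction_on with
    | _ n IH =>
      intro i j hij α β
      by_cases hab : (α:ℂ) + (β:ℂ) = 0
      · by_cases ha : (α:ℂ) = 0
        · -- α = β = 0 (as complex numbers)
          have hb : (β:ℂ) = 0 := by linear_combination hab - ha
          rcases Nat.eq_zero_or_pos n with hn | hn
          · -- i = j = 0 : use R1 at (0,1)
            obtain ⟨hi0, hj0⟩ : i = 0 ∧ j = 0 := by omega
            subst hi0; subst hj0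
            have r1 := R1 α β 0 1
            simp only [Nat.cast_zero, Nat.cast_one] at r1
            linear_combination r1 - (g α 0 β 1) * hab
          · -- i + j > 0 : use R2 at (i, j-1) or directly
            have r2 := R2 α β i j
            rw [ha, hb] at r2
            have hc : ((i:ℂ) + (j:ℂ)) ≠ 0 := by
              have : ((i + j : ℕ) : ℂ) ≠ 0 := Nat.cast_ne_zero.mpr (by omega)
              push_cast at this
              exact this
            have hz : ((i:ℂ) + (j:ℂ)) * g α i β j = 0 := by
              linear_combination r2
            exact (mul_eq_zero.mp hz).resolve_left hc
        · -- α ≠ 0, β = -α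
          have hb : (β:ℂ) = -(α:ℂ) := by linear_combination hab
          -- first: the case of positive first index, at level n
          have step : ∀ i' j' : ℕ, i' + 1 + j' = n → g α (i'+1) β j' = 0 := by
            intro i' j' hn
            have hprev : g α i' β j' = 0 := IH (i' + j') (by omega) i' j' rfl α β
            have r1 := R1 α β (i'+1) (j'+1)
            simp only [Nat.add_sub_cancel] at r1
            have r2 := R2 α β i' j'
            have hQP : g α (i'+1) β j' = g α i' β (j'+1) := by
              have hz : (α:ℂ) * (g α (i'+1) β j' - g α i' β (j'+1)) = 0 := by
                linear_combination r2 - ((i':ℂ) + (j':ℂ)) * hprev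
                  - (g α i' β (j'+1)) * hab
              rcases mul_eq_zero.mp hz with h | h
              · exact absurd h ha
              · exact sub_eq_zero.mp h
            have hz2 : ((i':ℂ) + (j':ℂ) + 2) * g α (i'+1) β j' = 0 := by
              push_cast at r1
              linear_combination r1 - (g α (i'+1) β (j'+1)) * hab
                - ((i':ℂ) + 1) * hQP.symm
            have hnz : ((i':ℂ) + (j':ℂ) + 2) ≠ 0 := by
              have h2 : ((i' + j' + 2 : ℕ) : ℂ) ≠ 0 := Nat.cast_ne_zero.mpr (by omega)
              intro h
              exact h2 (by push_cast; linear_combination h)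
            exact (mul_eq_zero.mp hz2).resolve_left hnz
          rcases Nat.eq_zero_or_pos i with hi0 | hipos
          · subst hi0
            rcases Nat.eq_zero_or_pos j with hj0 | hjpos
            · subst hj0
              have r1 := R1 α β 0 1
              simp only [Nat.cast_zero, Nat.cast_one] at r1
              linear_combination r1 - (g α 0 β 1) * hab
            · obtain ⟨j', rfl⟩ : ∃ j', j = j' + 1 := ⟨j - 1, by omega⟩
              have hstep : g α 1 β j' = 0 := step 0 j' (by omega)
              have r1 := R1 α β 1 (j'+1)
              simp only [Nat.add_sub_cancel] at r1
              push_cast at r1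
              linear_combination r1 - (g α 1 β (j'+1)) * hab
                - ((j':ℂ) + 1) * hstep
          · obtain ⟨i', rfl⟩ : ∃ i', i = i' + 1 := ⟨i - 1, by omega⟩
            exact step i' j (by omega)
      · -- α + β ≠ 0
        have r1 := R1 α β i j
        have hjz : (j:ℂ) * g α i β (j-1) = 0 := by
          rcases Nat.eq_zero_or_pos j with hj0 | hjpos
          · subst hj0; simp
          · rw [IH (i + (j-1)) (by omega) i (j-1) rfl α β, mul_zero]
        have hiz : (i:ℂ) * g α (i-1) β j = 0 := by
          rcases Nat.eq_zero_or_pos i with hi0 | hipos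
          · subst hi0; simp
          · rw [IH ((i-1) + j) (by omega) (i-1) j rfl α β, mul_zero]
        have hz : ((α:ℂ) + (β:ℂ)) * g α i β j = 0 := by
          linear_combination r1 - hjz - hiz
        exact (mul_eq_zero.mp hz).resolve_left hab
  refine ⟨0, fun α β i j => ?_⟩
  have := key (i + j) i j rfl α β
  simp only [hgdef] at this
  simp [this]
end
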